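/- arXiv:2501.17806 — 9 statements merged into one kernel-verified Lean document; each statement's English description precedes it below -/
import Mathlib

section
/- Let G be a finite group and H ≤ G a subgroup. If H is mixable and the action of G on the coset space G/H is mixable (i.e., there is a random subproduct g₁^{ε₁}⋯g_k^{ε_k} in G such that the random coset g₁^{ε₁}⋯g_k^{ε_k}H is uniform on G/H), then G is mixable, and mixlen(G) ≤ mixlen(H) + mixlen(G, G/H). -/
open scoped Classical

/-- The distribution of the random subproduct `g 0 ^ ε 0 * ⋯ * g (k-1) ^ ε (k-1)`,
where `ε i` are independent Bernoulli variables with parameters `p i`. -/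
noncomputable def subprodDist {G : Type*} [Group G] {k : ℕ} (g : Fin k → G)
    (p : Fin k → ℝ) (a : G) : ℝ :=
  ∑ ε : Fin k → Bool,
    (∏ i : Fin k, if ε i then p i else 1 - p i) *
      (if (List.ofFn fun i => if ε i then g i else 1).prod = a then 1 else 0)

/-- `(g, p)` is a mixing sequence: valid probabilities whose random subproduct
is uniform on `G`. -/
def IsMixingSeq {G : Type*} [Group G] {k : ℕ} (g : Fin k → G) (p : Fin k → ℝ) : Prop :=
  (∀ i, 0 ≤ p i ∧ p i ≤ 1) ∧ ∀ a : G, subprodDist g p a = 1 / (Nat.card G : ℝ)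

/-- A group is mixable if it admits a mixing sequence. -/
def Mixable (G : Type*) [Group G] : Prop :=
  ∃ (k : ℕ) (g : Fin k → G) (p : Fin k → ℝ), IsMixingSeq g p

/-- The mixing length of a group: minimal length of a mixing sequence. -/
noncomputable def mixlen (G : Type*) [Group G] : ℕ :=
  sInf {k | ∃ (g : Fin k → G) (p : Fin k → ℝ), IsMixingSeq g p}

/-- The distribution on `X` obtained by applying a random subproduct to `x0`. -/
noncomputable def actDist {G X : Type*} [Group G] [MulAction G X] {k : ℕ}
    (g : Fin k → G) (p : Fin k → ℝ) (x0 y : X) : ℝ :=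
  ∑ ε : Fin k → Bool,
    (∏ i : Fin k, if ε i then p i else 1 - p i) *
      (if (List.ofFn fun i => if ε i then g i else 1).prod • x0 = y then 1 else 0)

/-- `(g, p)` is a mixing sequence for the action of `G` on `X` with base point `x0`. -/
def IsActMixing {G X : Type*} [Group G] [MulAction G X] {k : ℕ}
    (g : Fin k → G) (p : Fin k → ℝ) (x0 : X) : Prop :=
  (∀ i, 0 ≤ p i ∧ p i ≤ 1) ∧ ∀ y : X, actDist g p x0 y = 1 / (Nat.card X : ℝ)

/-- The action of `G` on `X` is mixable. -/
def MixableAction (G X : Type*) [Group G] [MulAction G X] : Prop :=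
  ∃ (k : ℕ) (g : Fin k → G) (p : Fin k → ℝ) (x0 : X), IsActMixing g p x0

/-- The mixing length of the action of `G` on `X`. -/
noncomputable def actMixlen (G X : Type*) [Group G] [MulAction G X] : ℕ :=
  sInf {k | ∃ (g : Fin k → G) (p : Fin k → ℝ) (x0 : X), IsActMixing g p x0}


private lemma ofFn_prod_hom' {M N : Type*} [Monoid M] [Monoid N] {m : ℕ}
    (φ : M →* N) (f : Fin m → M) :
    (List.ofFn fun j => φ (f j)).prod = φ (List.ofFn f).prod := by
  rw [show (List.ofFn fun j => φ (f j)) = (List.ofFn f).map φ by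
    rw [List.map_ofFn]; rfl, List.prod_hom]

private def appendBoolEquiv (n m : ℕ) :
    ((Fin n → Bool) × (Fin m → Bool)) ≃ (Fin (n + m) → Bool) where
  toFun ε := Fin.append ε.1 ε.2
  invFun ε := (fun i => ε (Fin.castAdd m i), fun j => ε (Fin.natAdd n j))
  left_inv ε := by
    ext <;> simp [Fin.append_left, Fin.append_right]
  right_inv ε := by
    funext i
    refine Fin.addCases (fun i => ?_) (fun j => ?_) i <;>
      simp [Fin.append_left, Fin.append_right]

private lemma key_mixing {G : Type*} [Group G] [Finite G] (H : Subgroup G)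
    {m n : ℕ} (h : Fin m → H) (q : Fin m → ℝ) (hq : IsMixingSeq h q)
    (g : Fin n → G) (p : Fin n → ℝ) (x0 : G ⧸ H) (hp : IsActMixing g p x0) :
    ∃ (g' : Fin (n + m) → G) (p' : Fin (n + m) → ℝ), IsMixingSeq g' p' := by
  classical
  obtain ⟨b, hb⟩ : ∃ b : G, QuotientGroup.mk b = x0 := ⟨x0.out, QuotientGroup.out_eq' x0⟩
  refine ⟨Fin.append g (fun j => b * (h j : G) * b⁻¹), Fin.append p q, ?_, ?_⟩
  · intro i
    refine Fin.addCases (fun i => ?_) (fun j => ?_) i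
    · simpa [Fin.append_left] using hp.1 i
    · simpa [Fin.append_right] using hq.1 j
  · intro a
    have hinner : ∀ t : G,
        (∑ ε₂ : Fin m → Bool, (∏ j, if ε₂ j then q j else 1 - q j) *
          (if (((List.ofFn fun j => if ε₂ j then h j else (1 : H)).prod : H) : G) = t
            then 1 else 0))
        = if t ∈ H then 1 / (Nat.card H : ℝ) else 0 := by
      intro t
      by_cases ht : t ∈ H
      · rw [if_pos ht, ← hq.2 ⟨t, ht⟩, subprodDist]
        refine Finset.sum_congr rfl fun ε₂ _ => ?_
        have hiff : ((((List.ofFn fun j => if ε₂ j then h j else (1 : H)).prod : H) : G) = t)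
            ↔ ((List.ofFn fun j => if ε₂ j then h j else (1 : H)).prod = ⟨t, ht⟩) := by
          simp [Subtype.ext_iff]
        simp only [hiff]
        congr
      · rw [if_neg ht]
        refine Finset.sum_eq_zero fun ε₂ _ => ?_
        rw [if_neg, mul_zero]
        intro hc
        exact ht (hc ▸ (((List.ofFn fun j => if ε₂ j then h j else (1 : H)).prod : H)).2)
    have hcond : ∀ A x : G, (A * (b * x * b⁻¹) = a) ↔ (x = b⁻¹ * (A⁻¹ * (a * b))) := by
      intro A x
      constructor
      · intro e; rw [← e]; group
      · intro e; rw [e]; group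
    have hmem : ∀ A : G, (b⁻¹ * (A⁻¹ * (a * b)) ∈ H) ↔ (A • x0 = a • x0) := by
      intro A
      rw [← hb, MulAction.Quotient.smul_mk, MulAction.Quotient.smul_mk, QuotientGroup.eq]
      simp [mul_assoc, smul_eq_mul]
    have hlist : ∀ ε₂ : Fin m → Bool,
        (List.ofFn fun j => if ε₂ j then b * (h j : G) * b⁻¹ else 1).prod
          = b * (((List.ofFn fun j => if ε₂ j then h j else (1 : H)).prod : H) : G) * b⁻¹ := by
      intro ε₂
      have e1 : (fun j => if ε₂ j then b * (h j : G) * b⁻¹ else 1)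
          = fun j => ((MulAut.conj b).toMonoidHom.comp H.subtype)
              (if ε₂ j then h j else (1 : H)) := by
        funext j; by_cases hj : ε₂ j <;> simp [hj]
      rw [e1, ofFn_prod_hom']
      simp
    rw [subprodDist, ← Equiv.sum_comp (appendBoolEquiv n m), Fintype.sum_prod_type]
    have hterm : ∀ (ε₁ : Fin n → Bool) (ε₂ : Fin m → Bool),
        (∏ i : Fin (n + m),
            if appendBoolEquiv n m (ε₁, ε₂) i then Fin.append p q i
            else 1 - Fin.append p q i) *
          (if (List.ofFn fun i =>
              if appendBoolEquiv n m (ε₁, ε₂) i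
              then Fin.append g (fun j => b * (h j : G) * b⁻¹) i else 1).prod = a
           then 1 else 0)
        = ((∏ i, if ε₁ i then p i else 1 - p i) * (∏ j, if ε₂ j then q j else 1 - q j)) *
          (if (((List.ofFn fun j => if ε₂ j then h j else (1 : H)).prod : H) : G)
              = b⁻¹ * (((List.ofFn fun i => if ε₁ i then g i else 1).prod)⁻¹ * (a * b))
           then 1 else 0) := by
      intro ε₁ ε₂
      have hE : ∀ i, appendBoolEquiv n m (ε₁, ε₂) i = Fin.append ε₁ ε₂ i := fun _ => rfl
      simp only [hE]
      congr 1
      · rw [Fin.prod_univ_add]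
        simp [Fin.append_left, Fin.append_right]
      · rw [List.ofFn_add, List.prod_append]
        have hcl : ∀ i : Fin n, Fin.castLE (Nat.le_add_right n m) i = Fin.castAdd m i :=
          fun _ => rfl
        simp only [hcl, Fin.append_left, Fin.append_right]
        rw [hlist ε₂]
        exact if_congr (hcond _ _) rfl rfl
    simp only [hterm]
    have hsum2 : ∀ ε₁ : Fin n → Bool,
        (∑ ε₂ : Fin m → Bool,
          ((∏ i, if ε₁ i then p i else 1 - p i) * (∏ j, if ε₂ j then q j else 1 - q j)) *
          (if (((List.ofFn fun j => if ε₂ j then h j else (1 : H)).prod : H) : G)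
              = b⁻¹ * (((List.ofFn fun i => if ε₁ i then g i else 1).prod)⁻¹ * (a * b))
           then 1 else 0))
        = (∏ i, if ε₁ i then p i else 1 - p i) * (1 / (Nat.card H : ℝ)) *
            (if (List.ofFn fun i => if ε₁ i then g i else 1).prod • x0 = a • x0
             then 1 else 0) := by
      intro ε₁
      rw [show (∑ ε₂ : Fin m → Bool,
          ((∏ i, if ε₁ i then p i else 1 - p i) * (∏ j, if ε₂ j then q j else 1 - q j)) *
          (if (((List.ofFn fun j => if ε₂ j then h j else (1 : H)).prod : H) : G)
              = b⁻¹ * (((List.ofFn fun i => if ε₁ i then g i else 1).prod)⁻¹ * (a * b))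
           then 1 else 0))
        = (∏ i, if ε₁ i then p i else 1 - p i) *
          ∑ ε₂ : Fin m → Bool, (∏ j, if ε₂ j then q j else 1 - q j) *
          (if (((List.ofFn fun j => if ε₂ j then h j else (1 : H)).prod : H) : G)
              = b⁻¹ * (((List.ofFn fun i => if ε₁ i then g i else 1).prod)⁻¹ * (a * b))
           then 1 else 0) by rw [Finset.mul_sum]; exact Finset.sum_congr rfl fun _ _ => by ring]
      rw [hinner, hmem]
      by_cases hc : (List.ofFn fun i => if ε₁ i then g i else 1).prod • x0 = a • x0 <;>
        simp [hc, mul_assoc]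
    simp only [hsum2]
    have : (∑ ε₁ : Fin n → Bool,
        (∏ i, if ε₁ i then p i else 1 - p i) * (1 / (Nat.card H : ℝ)) *
          (if (List.ofFn fun i => if ε₁ i then g i else 1).prod • x0 = a • x0
           then 1 else 0))
        = (1 / (Nat.card H : ℝ)) * actDist g p x0 (a • x0) := by
      rw [actDist, Finset.mul_sum]
      exact Finset.sum_congr rfl fun _ _ => by ring
    rw [this, hp.2 (a • x0)]
    have hcard : (Nat.card G : ℝ) = (Nat.card (G ⧸ H) : ℝ) * (Nat.card H : ℝ) := by
      rw [Subgroup.card_eq_card_quotient_mul_card_subgroup H]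
      push_cast
      ring
    rw [one_div_mul_one_div, hcard]
    ring

/-- If `H ≤ G` is mixable and the action of `G` on `G/H` is mixable, then `G`
is mixable and `mixlen G ≤ mixlen H + mixlen (G, G/H)`. -/
theorem mixable_of_subgroup_and_coset_action (G : Type*) [Group G] [Finite G]
    (H : Subgroup G) (hH : Mixable H) (hact : MixableAction G (G ⧸ H)) :
    Mixable G ∧ mixlen G ≤ mixlen H + actMixlen G (G ⧸ H) := by
  classical
  have hne1 : {k | ∃ (g : Fin k → H) (p : Fin k → ℝ), IsMixingSeq g p}.Nonempty := by
    obtain ⟨k, g, p, hk⟩ := hH; exact ⟨k, g, p, hk⟩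
  have hne2 : {k | ∃ (g : Fin k → G) (p : Fin k → ℝ) (x0 : G ⧸ H),
      IsActMixing g p x0}.Nonempty := by
    obtain ⟨k, g, p, x0, hk⟩ := hact; exact ⟨k, g, p, x0, hk⟩
  obtain ⟨h, q, hq⟩ : ∃ (h : Fin (mixlen H) → H) (q : Fin (mixlen H) → ℝ),
      IsMixingSeq h q := Nat.sInf_mem hne1
  obtain ⟨g, p, x0, hp⟩ : ∃ (g : Fin (actMixlen G (G ⧸ H)) → G)
      (p : Fin (actMixlen G (G ⧸ H)) → ℝ) (x0 : G ⧸ H),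
      IsActMixing g p x0 := Nat.sInf_mem hne2
  obtain ⟨g', p', hgp'⟩ := key_mixing H h q hq g p x0 hp
  constructor
  · exact ⟨_, g', p', hgp'⟩
  · have : mixlen G ≤ actMixlen G (G ⧸ H) + mixlen H :=
      Nat.sInf_le ⟨g', p', hgp'⟩
    omega
end

section
/- If N is a normal subgroup of a finite group G such that both N and G/N are mixable, then G is mixable, with mixlen(G) ≤ mixlen(N) + mixlen(G/N). -/
open scoped Classical

/-- Push a monoid hom through the subproduct list. -/
lemma hom_subprod_list {G H : Type*} [Group G] [Group H] (φ : G →* H) {k : ℕ}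
    (g : Fin k → G) (ε : Fin k → Bool) :
    φ (List.ofFn fun i => if ε i then g i else 1).prod
      = (List.ofFn fun i => if ε i then φ (g i) else 1).prod := by
  rw [← List.prod_hom _ φ, List.map_ofFn]
  have : (⇑φ ∘ fun i => if ε i then g i else 1) = fun i => if ε i then φ (g i) else 1 := by
    funext i
    by_cases hi : ε i <;> simp [hi]
  rw [this]

/-- Subproduct distribution for a tuple inside a subgroup. -/
lemma subprodDist_subtype {G : Type*} [Group G] {N : Subgroup G} {k : ℕ}
    (g : Fin k → N) (p : Fin k → ℝ) (b : G) :
    subprodDist (fun i => ((g i : N) : G)) p b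
      = if h : b ∈ N then subprodDist g p ⟨b, h⟩ else 0 := by
  unfold subprodDist
  have key : ∀ ε : Fin k → Bool,
      (List.ofFn fun i => if ε i then ((g i : N) : G) else 1).prod
        = (((List.ofFn fun i => if ε i then g i else 1).prod : N) : G) := by
    intro ε
    rw [SubmonoidClass.coe_list_prod, List.map_ofFn]
    have : (Subtype.val ∘ fun i => if ε i then g i else 1)
        = fun i => if ε i then ((g i : N) : G) else 1 := by
      funext i
      by_cases hi : ε i <;> simp [hi]
    rw [this]
  split_ifs with h
  · refine Finset.sum_congr rfl fun ε _ => ?_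
    rw [key]
    congr 1
    simp [Subtype.ext_iff]
  · refine Finset.sum_eq_zero fun ε _ => ?_
    rw [key]
    have hne : (((List.ofFn fun i => if ε i then g i else 1).prod : N) : G) ≠ b := by
      intro hb
      exact h (hb ▸ ((List.ofFn fun i => if ε i then g i else 1).prod).2)
    rw [if_neg hne, mul_zero]

/-- Combine a mixing sequence for `N` and one for `G ⧸ N` into one for `G`. -/
lemma combine_mixing {G : Type*} [Group G] [Finite G] (N : Subgroup G) [N.Normal]
    {m n : ℕ} (gN : Fin m → N) (pN : Fin m → ℝ) (gQ : Fin n → G ⧸ N) (pQ : Fin n → ℝ)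
    (hgN : IsMixingSeq gN pN) (hgQ : IsMixingSeq gQ pQ) :
    ∃ (g : Fin (m + n) → G) (p : Fin (m + n) → ℝ), IsMixingSeq g p := by
  choose h hlift using fun i => QuotientGroup.mk_surjective (s := N) (gQ i)
  refine ⟨Fin.append (fun i => ((gN i : N) : G)) h, Fin.append pN pQ, ?_, ?_⟩
  · intro i
    induction i using Fin.addCases with
    | left i => simpa [Fin.append_left] using hgN.1 i
    | right j => simpa [Fin.append_right] using hgQ.1 j
  · intro a
    have hcard : (Nat.card G : ℝ) = (Nat.card N : ℝ) * (Nat.card (G ⧸ N) : ℝ) := by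
      rw [← Nat.cast_mul]
      congr 1
      rw [Subgroup.card_eq_card_quotient_mul_card_subgroup N]
      ring
    unfold subprodDist
    rw [← (Fin.appendEquiv m n).sum_comp, Fintype.sum_prod_type]
    have step : ∀ (ε1 : Fin m → Bool) (ε2 : Fin n → Bool),
        (∏ i : Fin (m + n),
            if Fin.appendEquiv m n (ε1, ε2) i then Fin.append pN pQ i
            else 1 - Fin.append pN pQ i) *
          (if (List.ofFn fun i =>
              if Fin.appendEquiv m n (ε1, ε2) i then
                Fin.append (fun i => ((gN i : N) : G)) h i else 1).prod = a then 1 else 0)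
        = ((∏ i : Fin m, if ε1 i then pN i else 1 - pN i) *
            (∏ j : Fin n, if ε2 j then pQ j else 1 - pQ j)) *
          (if (List.ofFn fun i => if ε1 i then ((gN i : N) : G) else 1).prod *
              (List.ofFn fun j => if ε2 j then h j else 1).prod = a then 1 else 0) := by
      intro ε1 ε2
      have e1 : (fun i => if Fin.appendEquiv m n (ε1, ε2) i then Fin.append pN pQ i
          else 1 - Fin.append pN pQ i)
          = Fin.append (fun i => if ε1 i then pN i else 1 - pN i)
              (fun j => if ε2 j then pQ j else 1 - pQ j) := by
        funext i
        induction i using Fin.addCases with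
        | left i => simp [Fin.appendEquiv, Fin.append_left]
        | right j => simp [Fin.appendEquiv, Fin.append_right]
      have e2 : (fun i => if Fin.appendEquiv m n (ε1, ε2) i then
            Fin.append (fun i => ((gN i : N) : G)) h i else 1)
          = Fin.append (fun i => if ε1 i then ((gN i : N) : G) else 1)
              (fun j => if ε2 j then h j else 1) := by
        funext i
        induction i using Fin.addCases with
        | left i => simp [Fin.appendEquiv, Fin.append_left]
        | right j => simp [Fin.appendEquiv, Fin.append_right]
      rw [e1, e2, Fin.prod_univ_add, List.ofFn_fin_append, List.prod_append]
      simp [Fin.append_left, Fin.append_right]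
    simp only [step]
    rw [Finset.sum_comm]
    have inner : ∀ ε2 : Fin n → Bool,
        (∑ ε1 : Fin m → Bool,
          ((∏ i : Fin m, if ε1 i then pN i else 1 - pN i) *
            (∏ j : Fin n, if ε2 j then pQ j else 1 - pQ j)) *
          (if (List.ofFn fun i => if ε1 i then ((gN i : N) : G) else 1).prod *
              (List.ofFn fun j => if ε2 j then h j else 1).prod = a then 1 else 0))
        = (∏ j : Fin n, if ε2 j then pQ j else 1 - pQ j) *
            ((1 / (Nat.card N : ℝ)) *
            (if (List.ofFn fun j => if ε2 j then gQ j else 1).prod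
                = (a : G ⧸ N) then 1 else 0)) := by
      intro ε2
      set y : G := (List.ofFn fun j => if ε2 j then h j else 1).prod with hy
      have hsum : (∑ ε1 : Fin m → Bool,
          ((∏ i : Fin m, if ε1 i then pN i else 1 - pN i) *
            (∏ j : Fin n, if ε2 j then pQ j else 1 - pQ j)) *
          (if (List.ofFn fun i => if ε1 i then ((gN i : N) : G) else 1).prod * y = a
            then 1 else 0))
          = (∏ j : Fin n, if ε2 j then pQ j else 1 - pQ j) *
              subprodDist (fun i => ((gN i : N) : G)) pN (a * y⁻¹) := by
        rw [subprodDist, Finset.mul_sum]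
        refine Finset.sum_congr rfl fun ε1 _ => ?_
        have : ((List.ofFn fun i => if ε1 i then ((gN i : N) : G) else 1).prod * y = a)
            ↔ ((List.ofFn fun i => if ε1 i then ((gN i : N) : G) else 1).prod = a * y⁻¹) := by
          constructor
          · intro hxy; rw [← hxy]; group
          · intro hx; rw [hx]; group
        rw [this]
        ring
      have hmem : (a * y⁻¹ ∈ N) ↔ ((y : G ⧸ N) = (a : G ⧸ N)) := by
        rw [(inferInstance : N.Normal).mem_comm_iff, QuotientGroup.eq]
      have hyq : ((y : G) : G ⧸ N) = (List.ofFn fun j => if ε2 j then gQ j else 1).prod := by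
        show (QuotientGroup.mk' N) y = _
        rw [hy, hom_subprod_list (QuotientGroup.mk' N)]
        have : (fun j => if ε2 j then (QuotientGroup.mk' N) (h j) else 1)
            = fun j => if ε2 j then gQ j else 1 := by
          funext j
          by_cases hj : ε2 j <;> simp [hj, QuotientGroup.mk'_apply, hlift j]
        rw [this]
      have key : subprodDist (fun i => ((gN i : N) : G)) pN (a * y⁻¹)
          = (1 / (Nat.card N : ℝ)) *
            (if (List.ofFn fun j => if ε2 j then gQ j else 1).prod = (a : G ⧸ N)
              then 1 else 0) := by
        rw [subprodDist_subtype]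
        by_cases h' : a * y⁻¹ ∈ N
        · rw [dif_pos h', hgN.2, if_pos (hyq.symm.trans (hmem.mp h')), mul_one]
        · rw [dif_neg h', if_neg, mul_zero]
          intro hc
          exact h' (hmem.mpr (hyq.trans hc))
      rw [hsum, key]
    simp only [inner]
    have hq : (∑ ε2 : Fin n → Bool,
        (∏ j : Fin n, if ε2 j then pQ j else 1 - pQ j) *
          ((1 / (Nat.card N : ℝ)) *
          (if (List.ofFn fun j => if ε2 j then gQ j else 1).prod = (a : G ⧸ N)
            then 1 else 0)))
        = (1 / (Nat.card N : ℝ)) * subprodDist gQ pQ (a : G ⧸ N) := by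
      rw [subprodDist, Finset.mul_sum]
      refine Finset.sum_congr rfl fun ε2 _ => ?_
      ring
    rw [hq, hgQ.2, hcard]
    have h1 : (Nat.card N : ℝ) ≠ 0 := by exact_mod_cast Nat.card_pos.ne'
    have h2 : (Nat.card (G ⧸ N) : ℝ) ≠ 0 := by exact_mod_cast Nat.card_pos.ne'
    field_simp

/-- If `N ⊴ G` and both `N` and `G/N` are mixable, then `G` is mixable, with
`mixlen G ≤ mixlen N + mixlen (G/N)`. -/
theorem mixable_of_normal_and_quotient (G : Type*) [Group G] [Finite G]
    (N : Subgroup G) [N.Normal] (hN : Mixable N) (hQ : Mixable (G ⧸ N)) :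
    Mixable G ∧ mixlen G ≤ mixlen N + mixlen (G ⧸ N) := by
  obtain ⟨gN, pN, hgN⟩ : ∃ (g : Fin (mixlen N) → N) (p : Fin (mixlen N) → ℝ),
      IsMixingSeq g p :=
    Nat.sInf_mem (s := {k | ∃ (g : Fin k → N) (p : Fin k → ℝ), IsMixingSeq g p}) hN
  obtain ⟨gQ, pQ, hgQ⟩ : ∃ (g : Fin (mixlen (G ⧸ N)) → G ⧸ N)
      (p : Fin (mixlen (G ⧸ N)) → ℝ), IsMixingSeq g p :=
    Nat.sInf_mem (s := {k | ∃ (g : Fin k → G ⧸ N) (p : Fin k → ℝ), IsMixingSeq g p}) hQ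
  obtain ⟨g, p, hgp⟩ := combine_mixing N gN pN gQ pQ hgN hgQ
  exact ⟨⟨_, g, p, hgp⟩, Nat.sInf_le ⟨g, p, hgp⟩⟩
end

section
/- A finite direct product G₁ × G₂ is mixable if and only if both G₁ and G₂ are mixable. -/
open scoped Classical

lemma subprod_list_prod_hom {G H : Type*} [Group G] [Group H] {k : ℕ} (φ : G →* H)
    (g : Fin k → G) (ε : Fin k → Bool) :
    (List.ofFn fun i => if ε i then φ (g i) else 1).prod
      = φ (List.ofFn fun i => if ε i then g i else 1).prod := by
  rw [← List.prod_hom _ φ, List.map_ofFn]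
  refine congrArg List.prod (congrArg List.ofFn (funext fun i => ?_))
  by_cases h : ε i <;> simp [h]

lemma subprodDist_comp_hom {G H : Type*} [Group G] [Group H] [Fintype G] {k : ℕ}
    (φ : G →* H) (g : Fin k → G) (p : Fin k → ℝ) (c : H) :
    subprodDist (fun i => φ (g i)) p c
      = ∑ a : G, if φ a = c then subprodDist g p a else 0 := by
  have hrhs : ∀ a : G, (if φ a = c then subprodDist g p a else 0)
      = ∑ ε : Fin k → Bool,
          (∏ i : Fin k, if ε i then p i else 1 - p i) *
            (if (List.ofFn fun i => if ε i then g i else 1).prod = a ∧ φ a = c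
              then 1 else 0) := by
    intro a
    by_cases hc : φ a = c <;> simp [subprodDist, hc]
  simp_rw [hrhs]
  rw [Finset.sum_comm]
  unfold subprodDist
  refine Finset.sum_congr rfl fun ε _ => ?_
  rw [subprod_list_prod_hom, ← Finset.mul_sum]
  congr 1
  simp_rw [ite_and]
  rw [Finset.sum_ite_eq]
  simp

lemma subprodDist_prodMk {G₁ G₂ : Type*} [Group G₁] [Group G₂] {k m : ℕ}
    (g : Fin k → G₁) (p : Fin k → ℝ) (h : Fin m → G₂) (q : Fin m → ℝ) (a₁ : G₁) (a₂ : G₂) :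
    subprodDist
      (fun i => Sum.elim (fun i => ((g i, 1) : G₁ × G₂)) (fun j => ((1, h j) : G₁ × G₂))
        (finSumFinEquiv.symm i))
      (fun i => Sum.elim p q (finSumFinEquiv.symm i)) (a₁, a₂)
      = subprodDist g p a₁ * subprodDist h q a₂ := by
  classical
  set E : (Fin k → Bool) × (Fin m → Bool) ≃ (Fin (k + m) → Bool) :=
    (Equiv.sumArrowEquivProdArrow (Fin k) (Fin m) Bool).symm.trans
      (Equiv.arrowCongr finSumFinEquiv (Equiv.refl Bool)) with hEdef
  have hE : ∀ (x : (Fin k → Bool) × (Fin m → Bool)) (i : Fin (k + m)),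
      E x i = Sum.elim x.1 x.2 (finSumFinEquiv.symm i) := by
    intro x i
    simp [hEdef, Equiv.arrowCongr, Equiv.sumArrowEquivProdArrow]
  unfold subprodDist
  rw [← Equiv.sum_comp E, Fintype.sum_prod_type]
  have key : ∀ (ε₁ : Fin k → Bool) (ε₂ : Fin m → Bool),
      (∏ i : Fin (k + m),
          if E (ε₁, ε₂) i then Sum.elim p q (finSumFinEquiv.symm i)
          else 1 - Sum.elim p q (finSumFinEquiv.symm i)) *
        (if (List.ofFn fun i =>
            if E (ε₁, ε₂) i then
              Sum.elim (fun i => ((g i, 1) : G₁ × G₂)) (fun j => ((1, h j) : G₁ × G₂))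
                (finSumFinEquiv.symm i)
            else 1).prod = (a₁, a₂) then (1:ℝ) else 0)
      = ((∏ i : Fin k, if ε₁ i then p i else 1 - p i) *
          (if (List.ofFn fun i => if ε₁ i then g i else 1).prod = a₁ then (1:ℝ) else 0)) *
        ((∏ j : Fin m, if ε₂ j then q j else 1 - q j) *
          (if (List.ofFn fun j => if ε₂ j then h j else 1).prod = a₂ then (1:ℝ) else 0)) := by
    intro ε₁ ε₂
    have hw : (∏ i : Fin (k + m),
        if E (ε₁, ε₂) i then Sum.elim p q (finSumFinEquiv.symm i)
        else 1 - Sum.elim p q (finSumFinEquiv.symm i))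
        = (∏ i : Fin k, if ε₁ i then p i else 1 - p i) *
          (∏ j : Fin m, if ε₂ j then q j else 1 - q j) := by
      rw [Fin.prod_univ_add]
      congr 1
      · exact Finset.prod_congr rfl fun i _ => by simp [hE]
      · exact Finset.prod_congr rfl fun j _ => by simp [hE]
    have hl : (List.ofFn fun i =>
        if E (ε₁, ε₂) i then
          Sum.elim (fun i => ((g i, 1) : G₁ × G₂)) (fun j => ((1, h j) : G₁ × G₂))
            (finSumFinEquiv.symm i)
        else 1).prod
        = (((List.ofFn fun i => if ε₁ i then g i else 1).prod : G₁),
           ((List.ofFn fun j => if ε₂ j then h j else 1).prod : G₂)) := by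
      rw [List.ofFn_add, List.prod_append]
      have h1 : (List.ofFn fun i : Fin k =>
          if E (ε₁, ε₂) (Fin.castAdd m i) then
            Sum.elim (fun i => ((g i, 1) : G₁ × G₂)) (fun j => ((1, h j) : G₁ × G₂))
              (finSumFinEquiv.symm (Fin.castAdd m i))
          else 1)
          = List.ofFn fun i : Fin k => if ε₁ i then MonoidHom.inl G₁ G₂ (g i) else 1 := by
        congr 1; funext i; simp [hE]
      have h2 : (List.ofFn fun j : Fin m =>
          if E (ε₁, ε₂) (Fin.natAdd k j) then
            Sum.elim (fun i => ((g i, 1) : G₁ × G₂)) (fun j => ((1, h j) : G₁ × G₂))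
              (finSumFinEquiv.symm (Fin.natAdd k j))
          else 1)
          = List.ofFn fun j : Fin m => if ε₂ j then MonoidHom.inr G₁ G₂ (h j) else 1 := by
        congr 1; funext j; simp [hE]
      change (List.ofFn fun i : Fin k =>
          if E (ε₁, ε₂) (Fin.castAdd m i) then
            Sum.elim (fun i => ((g i, 1) : G₁ × G₂)) (fun j => ((1, h j) : G₁ × G₂))
              (finSumFinEquiv.symm (Fin.castAdd m i))
          else 1).prod * _ = _
      rw [h1, h2, subprod_list_prod_hom (MonoidHom.inl G₁ G₂),
        subprod_list_prod_hom (MonoidHom.inr G₁ G₂)]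
      simp [Prod.ext_iff]
    rw [hw]
    simp only [hl, Prod.mk.injEq, ite_and]
    by_cases h1 : (List.ofFn fun i => if ε₁ i then g i else 1).prod = a₁ <;>
      by_cases h2 : (List.ofFn fun j => if ε₂ j then h j else 1).prod = a₂ <;>
      simp [h1, h2] <;> try ring
  simp_rw [key]
  rw [← Finset.sum_mul_sum]

lemma fiber_sum_fst {A B : Type*} [Fintype A] [Fintype B] (a : A) (c : ℝ) :
    ∑ x : A × B, (if x.1 = a then c else 0) = (Fintype.card B : ℝ) * c := by
  rw [Fintype.sum_prod_type]
  have hsum : (∑ x : A, ∑ y : B, if (x, y).1 = a then c else 0)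
      = ∑ x : A, (if x = a then (Fintype.card B : ℝ) * c else 0) := by
    refine Finset.sum_congr rfl fun x _ => ?_
    by_cases hx : x = a <;> simp [hx, Finset.sum_const, mul_comm]
  rw [hsum, Finset.sum_ite_eq']
  simp

lemma fiber_sum_snd {A B : Type*} [Fintype A] [Fintype B] (b : B) (c : ℝ) :
    ∑ x : A × B, (if x.2 = b then c else 0) = (Fintype.card A : ℝ) * c := by
  rw [Fintype.sum_prod_type_right]
  have hsum : (∑ y : B, ∑ x : A, if (x, y).2 = b then c else 0)
      = ∑ y : B, (if y = b then (Fintype.card A : ℝ) * c else 0) := by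
    refine Finset.sum_congr rfl fun y _ => ?_
    by_cases hy : y = b <;> simp [hy, Finset.sum_const, mul_comm]
  rw [hsum, Finset.sum_ite_eq']
  simp

/-- A finite direct product `G₁ × G₂` is mixable iff both factors are mixable. -/
theorem mixable_prod_iff (G₁ G₂ : Type*) [Group G₁] [Group G₂] [Finite G₁] [Finite G₂] :
    Mixable (G₁ × G₂) ↔ Mixable G₁ ∧ Mixable G₂ := by
  cases nonempty_fintype G₁
  cases nonempty_fintype G₂
  have h1 : (0 : ℝ) < Nat.card G₁ := by exact_mod_cast Nat.card_pos
  have h2 : (0 : ℝ) < Nat.card G₂ := by exact_mod_cast Nat.card_pos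
  have hcard : (Nat.card (G₁ × G₂) : ℝ) = (Nat.card G₁ : ℝ) * (Nat.card G₂ : ℝ) := by
    rw [Nat.card_prod]; push_cast; ring
  constructor
  · rintro ⟨k, g, p, hp, hu⟩
    constructor
    · refine ⟨k, fun i => (g i).1, p, hp, fun a => ?_⟩
      have hh := subprodDist_comp_hom (MonoidHom.fst G₁ G₂) g p a
      simp only [MonoidHom.coe_fst] at hh
      rw [hh]
      simp_rw [hu]
      rw [fiber_sum_fst, hcard, Nat.card_eq_fintype_card (α := G₂)]
      field_simp
      try ring
    · refine ⟨k, fun i => (g i).2, p, hp, fun a => ?_⟩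
      have hh := subprodDist_comp_hom (MonoidHom.snd G₁ G₂) g p a
      simp only [MonoidHom.coe_snd] at hh
      rw [hh]
      simp_rw [hu]
      rw [fiber_sum_snd, hcard, Nat.card_eq_fintype_card (α := G₁)]
      field_simp
      try ring
  · rintro ⟨⟨k, g, p, hp, hu⟩, ⟨m, h, q, hq, hv⟩⟩
    refine ⟨k + m,
      fun i => Sum.elim (fun i => ((g i, 1) : G₁ × G₂)) (fun j => ((1, h j) : G₁ × G₂))
        (finSumFinEquiv.symm i),
      fun i => Sum.elim p q (finSumFinEquiv.symm i), ?_, ?_⟩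
    · intro i
      cases hsi : finSumFinEquiv.symm i with
      | inl i' => simpa [hsi] using hp i'
      | inr j' => simpa [hsi] using hq j'
    · rintro ⟨a₁, a₂⟩
      rw [subprodDist_prodMk, hu, hv, hcard]
      field_simp
end

section
/- A nontrivial finite group of odd order is not mixable; more generally, any finite group with a nontrivial quotient of odd order is not mixable. -/
open scoped Classical

private lemma list_prod_add_expand {R : Type*} [Semiring R] :
    ∀ {k : ℕ} (A B : Fin k → R),
      (List.ofFn fun i => A i + B i).prod
        = ∑ ε : Fin k → Bool, (List.ofFn fun i => if ε i then A i else B i).prod := by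
  intro k
  induction k with
  | zero =>
    intro A B
    simp
  | succ k ih =>
    intro A B
    rw [← Equiv.sum_comp (Fin.consEquiv (fun _ : Fin (k + 1) => Bool)), Fintype.sum_prod_type]
    have h1 : ∀ (b : Bool) (ε : Fin k → Bool),
        (List.ofFn fun i : Fin (k + 1) =>
            if (Fin.consEquiv (fun _ => Bool)) (b, ε) i then A i else B i).prod
          = (if b then A 0 else B 0) *
            (List.ofFn fun i : Fin k => if ε i then A i.succ else B i.succ).prod := by
      intro b ε
      rw [List.ofFn_succ, List.prod_cons]
      simp [Fin.consEquiv]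
    simp only [h1, ← Finset.mul_sum, Fintype.sum_bool,
      ← ih (fun i => A i.succ) (fun i => B i.succ)]
    rw [List.ofFn_succ, List.prod_cons, add_mul]
    norm_num

private lemma list_prod_single {G : Type*} [Group G] :
    ∀ {k : ℕ} (x : Fin k → G) (r : Fin k → ℝ),
      (List.ofFn fun i => (MonoidAlgebra.single (x i) (r i) : MonoidAlgebra ℝ G)).prod
        = MonoidAlgebra.single (List.ofFn x).prod (∏ i, r i) := by
  intro k
  induction k with
  | zero =>
    intro x r
    simp [MonoidAlgebra.one_def]
  | succ k ih =>
    intro x r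
    rw [List.ofFn_succ, List.prod_cons, ih (fun i => x i.succ) (fun i => r i.succ),
      MonoidAlgebra.single_mul_single, List.ofFn_succ (f := x), List.prod_cons,
      Fin.prod_univ_succ]

private lemma subprod_eq {G : Type*} [Group G] {k : ℕ} (g : Fin k → G) (p : Fin k → ℝ) :
    (List.ofFn fun i => (MonoidAlgebra.single (g i) (p i)
        + MonoidAlgebra.single 1 (1 - p i) : MonoidAlgebra ℝ G)).prod
      = ∑ ε : Fin k → Bool,
          MonoidAlgebra.single ((List.ofFn fun i => if ε i then g i else 1).prod)
            (∏ i, if ε i then p i else 1 - p i) := by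
  rw [list_prod_add_expand]
  refine Finset.sum_congr rfl fun ε _ => ?_
  have h1 : (fun i => if ε i then (MonoidAlgebra.single (g i) (p i) : MonoidAlgebra ℝ G)
      else MonoidAlgebra.single 1 (1 - p i))
      = fun i => MonoidAlgebra.single (if ε i then g i else 1)
          (if ε i then p i else 1 - p i) := by
    funext i; by_cases h : ε i <;> simp [h]
  rw [h1, list_prod_single]

private lemma mapDomainRingHom_single {k : Type*} [Semiring k] {G H : Type*} [Monoid G]
    [Monoid H] (f : G →* H) (a : G) (r : k) :
    MonoidAlgebra.mapDomainRingHom k f (MonoidAlgebra.single a r)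
      = MonoidAlgebra.single (f a) r :=
  MonoidAlgebra.mapDomain_single

open scoped IsMulCommutative in
private lemma isUnit_single_add {H : Type*} [Group H] (h : H) (d : ℕ) (hd : Odd d)
    (hd1 : h ^ d = 1) {p : ℝ} (hp0 : 0 ≤ p) (hp1 : p ≤ 1) :
    IsUnit (MonoidAlgebra.single h p + MonoidAlgebra.single (1 : H) (1 - p) :
      MonoidAlgebra ℝ H) := by
  set K := Subgroup.zpowers h with hK
  have hmem : h ∈ K := Subgroup.mem_zpowers h
  have hc : (0 : ℝ) < p ^ d + (1 - p) ^ d := by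
    rcases lt_or_eq_of_le hp1 with h1 | h1
    · have h2 : 0 < (1 - p) ^ d := pow_pos (by linarith) d
      have h3 : 0 ≤ p ^ d := pow_nonneg hp0 d
      linarith
    · have h2 : p ^ d = 1 := by rw [h1]; simp
      have h3 : 0 ≤ (1 - p) ^ d := pow_nonneg (by linarith) d
      linarith
  set x : MonoidAlgebra ℝ ↥K := MonoidAlgebra.single ⟨h, hmem⟩ p with hx
  set y : MonoidAlgebra ℝ ↥K := MonoidAlgebra.single (1 : ↥K) (1 - p) with hy
  have hdvd : x + y ∣ x ^ d + y ^ d := Odd.add_dvd_pow_add_pow x y hd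
  have hpow : x ^ d + y ^ d
      = MonoidAlgebra.single (1 : ↥K) (p ^ d + (1 - p) ^ d) := by
    rw [hx, hy, MonoidAlgebra.single_pow, MonoidAlgebra.single_pow, one_pow]
    have : ((⟨h, hmem⟩ : ↥K) ^ d) = (1 : ↥K) := by
      ext; simp [hd1]
    rw [this]
    exact (MonoidAlgebra.single_add _ _ _).symm
  have hu : IsUnit (x ^ d + y ^ d) := by
    rw [hpow]
    refine IsUnit.of_mul_eq_one (MonoidAlgebra.single 1 ((p ^ d + (1 - p) ^ d)⁻¹)) ?_
    rw [MonoidAlgebra.single_mul_single, one_mul, mul_inv_cancel₀ (ne_of_gt hc),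
      MonoidAlgebra.one_def]
  have hxy : IsUnit (x + y) := isUnit_of_dvd_unit hdvd hu
  have := hxy.map (MonoidAlgebra.mapDomainRingHom ℝ K.subtype)
  rwa [map_add, hx, hy, mapDomainRingHom_single, mapDomainRingHom_single, map_one] at this

private lemma key_not_mixable {G : Type*} [Group G] [Finite G] (N : Subgroup G) [N.Normal]
    (hN : N ≠ ⊤) (hodd : Odd (Nat.card (G ⧸ N))) : ¬ Mixable G := by
  rintro ⟨k, g, p, hprob, huni⟩
  cases nonempty_fintype G
  obtain ⟨b, hb⟩ : ∃ b : G, b ∉ N := by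
    by_contra hcon
    push_neg at hcon
    exact hN ((Subgroup.eq_top_iff' N).mpr hcon)
  set n : ℝ := (Nat.card G : ℝ) with hn
  set X : MonoidAlgebra ℝ G := (List.ofFn fun i =>
    (MonoidAlgebra.single (g i) (p i) + MonoidAlgebra.single 1 (1 - p i))).prod with hXdef
  have hXsum : X = ∑ ε : Fin k → Bool,
      MonoidAlgebra.single ((List.ofFn fun i => if ε i then g i else 1).prod)
        (∏ i, if ε i then p i else 1 - p i) := subprod_eq g p
  have hXa : ∀ a : G, X.coeff a = subprodDist g p a := by
    intro a
    rw [hXsum, MonoidAlgebra.coeff_sum, Finset.sum_apply']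
    refine Finset.sum_congr rfl fun ε _ => ?_
    rw [MonoidAlgebra.coeff_single, Finsupp.single_apply]
    by_cases hh : (List.ofFn fun i => if ε i then g i else 1).prod = a <;> simp [hh]
  have hXuniform : X = ∑ a : G, MonoidAlgebra.single a (1 / n) := by
    ext a
    rw [hXa a, huni a, MonoidAlgebra.coeff_sum, Finset.sum_apply']
    simp [Finsupp.single_apply]
  set π : G →* G ⧸ N := QuotientGroup.mk' N with hπ
  set Φ : MonoidAlgebra ℝ G →+* MonoidAlgebra ℝ (G ⧸ N) :=
    MonoidAlgebra.mapDomainRingHom ℝ π with hΦ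
  have hunit : IsUnit (Φ X) := by
    rw [hXdef, map_list_prod, List.map_ofFn]
    refine List.prod_isUnit fun m hm => ?_
    rw [List.mem_ofFn] at hm
    obtain ⟨i, rfl⟩ := hm
    have hΦm : (Φ ∘ fun i => (MonoidAlgebra.single (g i) (p i)
        + MonoidAlgebra.single 1 (1 - p i))) i
        = MonoidAlgebra.single (π (g i)) (p i)
          + MonoidAlgebra.single (1 : G ⧸ N) (1 - p i) := by
      simp only [Function.comp_apply, map_add, hΦ, mapDomainRingHom_single, map_one]
    rw [hΦm]
    have hdvd : orderOf (π (g i)) ∣ Nat.card (G ⧸ N) := orderOf_dvd_natCard _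
    have hoddd : Odd (orderOf (π (g i))) := by
      rw [← Nat.not_even_iff_odd, even_iff_two_dvd] at hodd ⊢
      exact fun h2 => hodd (h2.trans hdvd)
    exact isUnit_single_add _ _ hoddd (pow_orderOf_eq_one _) (hprob i).1 (hprob i).2
  have hΦX : Φ X = ∑ a : G, MonoidAlgebra.single (π a) (1 / n) := by
    rw [hXuniform, map_sum]
    refine Finset.sum_congr rfl fun a _ => ?_
    rw [hΦ, mapDomainRingHom_single]
  have hfix : Φ X * MonoidAlgebra.single (π b) 1 = Φ X * 1 := by
    rw [mul_one, hΦX, Finset.sum_mul]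
    have h1 : ∀ a : G, MonoidAlgebra.single (π a) (1 / n) * MonoidAlgebra.single (π b) 1
        = MonoidAlgebra.single (π (a * b)) (1 / n) := by
      intro a
      rw [MonoidAlgebra.single_mul_single, mul_one, map_mul]
    simp only [h1]
    exact Equiv.sum_comp (Equiv.mulRight b) fun a => MonoidAlgebra.single (π a) (1 / n)
  have hsingle : MonoidAlgebra.single (π b) (1 : ℝ) = 1 :=
    hunit.mul_right_inj.mp hfix
  rw [MonoidAlgebra.one_def] at hsingle
  rcases MonoidAlgebra.single_inj.mp hsingle with ⟨h1, _⟩ | ⟨h1, _⟩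
  · exact hb ((QuotientGroup.eq_one_iff b).mp h1)
  · exact one_ne_zero h1

/-- A nontrivial finite group of odd order is not mixable; more generally, a
finite group with a nontrivial quotient of odd order is not mixable. -/
theorem not_mixable_of_odd_quotient (G : Type*) [Group G] [Finite G] :
    (Nontrivial G → Odd (Nat.card G) → ¬ Mixable G) ∧
    (∀ N : Subgroup G, N.Normal → N ≠ ⊤ → Odd (Nat.card (G ⧸ N)) → ¬ Mixable G) := by
  have key : ∀ N : Subgroup G, N.Normal → N ≠ ⊤ → Odd (Nat.card (G ⧸ N)) → ¬ Mixable G := by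
    intro N hNorm hN hodd
    exact @key_not_mixable G _ _ N hNorm hN hodd
  refine ⟨fun hnt hodd => ?_, key⟩
  refine key ⊥ inferInstance ?_ ?_
  · intro h
    obtain ⟨a, b, hab⟩ := hnt
    have ha : a ∈ (⊥ : Subgroup G) := h ▸ Subgroup.mem_top a
    have hbb : b ∈ (⊥ : Subgroup G) := h ▸ Subgroup.mem_top b
    rw [Subgroup.mem_bot] at ha hbb
    exact hab (ha.trans hbb.symm)
  · rwa [Nat.card_congr (QuotientGroup.quotientBot (G := G)).toEquiv]
end

section
/- A finite abelian group is mixable if and only if it is a 2-group. -/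
open scoped Classical

set_option maxHeartbeats 1000000

universe u

private lemma subprod_exists (n : ℕ) :
    ∀ (G : Type u) [CommGroup G] [Finite G], Nat.card G = 2 ^ n →
      ∃ g : Fin n → G, Function.Bijective
        (fun ε : Fin n → Bool => ∏ i, if ε i then g i else 1) := by
  induction n with
  | zero =>
    intro G _ _ h
    have : Subsingleton G := by
      rw [pow_zero] at h
      exact Nat.card_eq_one_iff_unique.mp h |>.1
    refine ⟨fun _ => 1, fun ε ε' _ => funext fun i => i.elim0, fun a => ⟨fun _ => true, Subsingleton.elim _ _⟩⟩
  | succ n ih =>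
    intro G _ _ h
    have := Fintype.ofFinite G
    haveI : Fact (Nat.Prime 2) := ⟨Nat.prime_two⟩
    obtain ⟨t, ht⟩ := exists_prime_orderOf_dvd_card' (G := G) 2
      (by rw [h]; exact dvd_pow_self 2 n.succ_ne_zero)
    have htne : t ≠ 1 := by
      intro heq
      rw [heq, orderOf_one] at ht
      omega
    set N := Subgroup.zpowers t with hN
    have hcardN : Nat.card N = 2 := by rw [Nat.card_zpowers, ht]
    have hcardQ : Nat.card (G ⧸ N) = 2 ^ n := by
      have := Subgroup.card_eq_card_quotient_mul_card_subgroup N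
      rw [hcardN, h, pow_succ] at this
      omega
    obtain ⟨q, hq⟩ := ih (G ⧸ N) hcardQ
    set g : Fin (n + 1) → G := Fin.snoc (fun i => (q i).out) t with hg
    have hmk : ∀ ε : Fin (n + 1) → Bool,
        QuotientGroup.mk' N (∏ i, if ε i then g i else 1)
          = ∏ i : Fin n, if ε i.castSucc then q i else 1 := by
      intro ε
      rw [map_prod, Fin.prod_univ_castSucc]
      have hlast : (QuotientGroup.mk' N) (if ε (Fin.last n) then g (Fin.last n) else 1) = 1 := by
        rcases Bool.eq_false_or_eq_true (ε (Fin.last n)) with hb | hb <;> simp [hb, hg, Fin.snoc_last]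
        exact Subgroup.mem_zpowers t
      rw [hlast, mul_one]
      refine Finset.prod_congr rfl fun i _ => ?_
      rcases Bool.eq_false_or_eq_true (ε i.castSucc) with hb | hb <;>
        simp [hb, hg, Fin.snoc_castSucc, QuotientGroup.out_eq']
    set F := fun ε : Fin (n + 1) → Bool => ∏ i, if ε i then g i else 1 with hF
    have hinj : Function.Injective F := by
      intro ε ε' hee
      have h1 : (fun i : Fin n => ε i.castSucc) = fun i => ε' i.castSucc := by
        apply hq.injective
        show (∏ i : Fin n, if ε i.castSucc then q i else 1)
          = ∏ i : Fin n, if ε' i.castSucc then q i else 1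
        rw [← hmk ε, ← hmk ε']
        exact congrArg _ hee
      have h2 : ε (Fin.last n) = ε' (Fin.last n) := by
        have hprod : (∏ i : Fin n, if ε i.castSucc then g i.castSucc else 1)
            = ∏ i : Fin n, if ε' i.castSucc then g i.castSucc else 1 := by
          refine Finset.prod_congr rfl fun i _ => ?_
          rw [congrFun h1 i]
        have := hee
        rw [hF] at this
        simp only [Fin.prod_univ_castSucc, hprod] at this
        have h3 := mul_left_cancel this
        by_contra hne
        rcases Bool.eq_false_or_eq_true (ε (Fin.last n)) with hb | hb <;>
          rcases Bool.eq_false_or_eq_true (ε' (Fin.last n)) with hb' | hb' <;>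
            simp [hb, hb', hg, Fin.snoc_last] at h3 hne <;> exact htne (by simp [h3])
      funext i
      refine Fin.lastCases h2 (fun j => congrFun h1 j) i
    refine ⟨g, (Nat.bijective_iff_injective_and_card F).mpr ⟨hinj, ?_⟩⟩
    simp only [Nat.card_eq_fintype_card] at h ⊢
    simp [h]

private lemma mixable_of_two_pow {G : Type u} [CommGroup G] [Finite G]
    {n : ℕ} (h : Nat.card G = 2 ^ n) : Mixable G := by
  obtain ⟨g, hg⟩ := subprod_exists n G h
  refine ⟨n, g, fun _ => 1/2, fun i => by norm_num, fun a => ?_⟩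
  have hw : ∀ ε : Fin n → Bool,
      (∏ _i : Fin n, if ε _i then (1/2:ℝ) else 1 - 1/2) = (1/2:ℝ)^n := by
    intro ε
    have hhalf : ∀ i, (if ε i then (1/2:ℝ) else 1 - 1/2) = 1/2 := by intro i; norm_num
    rw [Finset.prod_congr rfl fun i _ => hhalf i, Finset.prod_const]
    simp
  unfold subprodDist
  simp only [hw, List.prod_ofFn]
  set e := Equiv.ofBijective _ hg with he
  calc ∑ ε : Fin n → Bool,
        (1/2:ℝ)^n * (if (∏ i, if ε i then g i else 1) = a then 1 else 0)
      = ∑ ε : Fin n → Bool, (if ε = e.symm a then (1/2:ℝ)^n else 0) := by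
        refine Finset.sum_congr rfl fun ε _ => ?_
        by_cases hc : ε = e.symm a
        · rw [if_pos hc, if_pos, mul_one]
          rw [hc]; exact e.apply_symm_apply a
        · rw [if_neg hc, if_neg, mul_zero]
          intro hcc
          exact hc (by rw [Equiv.eq_symm_apply]; exact hcc)
    _ = (1/2:ℝ)^n := by
        rw [Finset.sum_eq_single (e.symm a) (fun x _ hx => if_neg hx)
          (fun hmem => absurd (Finset.mem_univ _) hmem), if_pos rfl]
    _ = 1 / (Nat.card G : ℝ) := by rw [h]; push_cast; rw [div_pow, one_pow]

private lemma aux_prod_sum {k : ℕ} (f : Fin k → Bool → ℂ) :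
    ∑ ε : Fin k → Bool, ∏ i, f i (ε i) = ∏ i, ∑ b : Bool, f i b := (Fintype.prod_sum f).symm

private lemma two_pow_of_mixable {G : Type u} [CommGroup G] [Finite G]
    (hmix : Mixable G) : ∃ n : ℕ, Nat.card G = 2 ^ n := by
  by_contra hn
  push_neg at hn
  obtain ⟨k, g, p, hb, hu⟩ := hmix
  have := Fintype.ofFinite G
  have hc0 : Nat.card G ≠ 0 := Nat.card_pos.ne'
  set c := Nat.card G with hc
  -- find an odd prime divisor of c
  have hm1 : ordCompl[2] c ≠ 1 := by
    intro h1
    refine hn (c.factorization 2) ?_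
    have h2 := Nat.ordProj_mul_ordCompl_eq_self c 2
    rw [h1, mul_one] at h2
    omega
  have hP : (ordCompl[2] c).minFac.Prime := Nat.minFac_prime hm1
  set P := (ordCompl[2] c).minFac with hPdef
  have hP2 : P ≠ 2 := by
    intro h2
    have hdvd : P ∣ ordCompl[2] c := Nat.minFac_dvd _
    rw [h2] at hdvd
    exact Nat.not_dvd_ordCompl Nat.prime_two hc0 hdvd
  have hPc : P ∣ c := by
    have hdvd : P ∣ ordCompl[2] c := Nat.minFac_dvd _
    exact hdvd.trans (Nat.ordCompl_dvd c 2)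
  haveI : Fact P.Prime := ⟨hP⟩
  obtain ⟨a, ha⟩ := exists_prime_orderOf_dvd_card' P hPc
  have ha1 : a ≠ 1 := by
    intro h1
    rw [h1, orderOf_one] at ha
    exact hP.one_lt.ne ha
  -- nontrivial character with values that are m'-th roots of unity, m' odd
  haveI : NeZero ((Monoid.exponent G : ℂ)) :=
    ⟨Nat.cast_ne_zero.mpr Monoid.exponent_ne_zero_of_finite⟩
  obtain ⟨φ, hφ⟩ := CommGroup.exists_apply_ne_one_of_hasEnoughRootsOfUnity G ℂ ha1
  set s := (Monoid.exponent G).factorization 2 with hs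
  set m' := ordCompl[2] (Monoid.exponent G) with hm'
  have hsm : 2 ^ s * m' = Monoid.exponent G := Nat.ordProj_mul_ordCompl_eq_self _ 2
  have h2m : ¬ (2 ∣ m') :=
    Nat.not_dvd_ordCompl Nat.prime_two Monoid.exponent_ne_zero_of_finite
  have hodd : Odd m' := Nat.odd_iff.mpr (by omega)
  set Ψ : G →* ℂ := (Units.coeHom ℂ).comp (φ ^ (2^s)) with hΨ
  have hΨval : ∀ x : G, Ψ x = ((φ x : ℂˣ) : ℂ) ^ (2^s) := by
    intro x; simp [hΨ]
  have hΨm : ∀ x : G, Ψ x ^ m' = 1 := by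
    intro x
    rw [hΨval, ← pow_mul, hsm]
    have hx : x ^ Monoid.exponent G = 1 := Monoid.pow_exponent_eq_one x
    have : (φ x) ^ Monoid.exponent G = 1 := by rw [← map_pow, hx, map_one]
    rw [← Units.val_pow_eq_pow_val, this, Units.val_one]
  have hΨa : Ψ a ≠ 1 := by
    rw [hΨval]
    intro h1
    have h1' : (φ a) ^ (2^s) = 1 := by
      apply Units.ext
      rw [Units.val_pow_eq_pow_val, h1, Units.val_one]
    have hord1 : orderOf (φ a) ∣ 2^s := orderOf_dvd_of_pow_eq_one h1'
    have hordP : orderOf (φ a) ∣ P := by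
      apply orderOf_dvd_of_pow_eq_one
      rw [← map_pow, ← ha, pow_orderOf_eq_one, map_one]
    rcases (Nat.Prime.eq_one_or_self_of_dvd hP _ hordP) with h | h
    · exact hφ (orderOf_eq_one_iff.mp h)
    · rw [h] at hord1
      exact hP2 ((Nat.prime_dvd_prime_iff_eq hP Nat.prime_two).mp
        (hP.dvd_of_dvd_pow hord1))
  -- sum of nontrivial character is zero
  have hsum : ∑ x : G, Ψ x = 0 := by
    by_contra h0
    apply hΨa
    have h1 : Ψ a * ∑ x : G, Ψ x = ∑ x : G, Ψ x := by
      rw [Finset.mul_sum]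
      calc ∑ x : G, Ψ a * Ψ x = ∑ x : G, Ψ (a * x) := by
            refine Finset.sum_congr rfl fun x _ => (map_mul Ψ a x).symm
        _ = ∑ x : G, Ψ x := Fintype.sum_equiv (Equiv.mulLeft a) _ _ (fun x => rfl)
    have h2 : Ψ a * ∑ x : G, Ψ x = 1 * ∑ x : G, Ψ x := by rw [h1, one_mul]
    exact mul_right_cancel₀ h0 h2
  -- Fourier computation
  have hcast : ∀ x : G, (subprodDist g p x : ℂ)
      = ∑ ε : Fin k → Bool, (∏ i : Fin k, if ε i then ((p i : ℝ):ℂ) else 1 - ((p i : ℝ):ℂ)) *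
          (if (∏ i : Fin k, if ε i then g i else 1) = x then 1 else 0) := by
    intro x
    unfold subprodDist
    push_cast
    refine Finset.sum_congr rfl fun ε _ => ?_
    rw [List.prod_ofFn]
    congr 1
    · refine Finset.prod_congr rfl fun i _ => ?_
      rcases Bool.eq_false_or_eq_true (ε i) with hb | hb <;> simp [hb]
    · rcases eq_or_ne (∏ i : Fin k, if ε i = true then g i else 1) x with hb | hb <;> simp [hb]
  have hkey : ∑ x : G, (subprodDist g p x : ℂ) * Ψ x
      = ∏ i : Fin k, (((1 - p i : ℝ) : ℂ) + ((p i : ℝ) : ℂ) * Ψ (g i)) := by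
    calc ∑ x : G, (subprodDist g p x : ℂ) * Ψ x
        = ∑ x : G, ∑ ε : Fin k → Bool,
            ((∏ i : Fin k, if ε i then ((p i : ℝ):ℂ) else 1 - ((p i : ℝ):ℂ)) *
              (if (∏ i : Fin k, if ε i then g i else 1) = x then 1 else 0)) * Ψ x := by
          refine Finset.sum_congr rfl fun x _ => ?_
          rw [hcast x, Finset.sum_mul]
      _ = ∑ ε : Fin k → Bool, ∑ x : G,
            ((∏ i : Fin k, if ε i then ((p i : ℝ):ℂ) else 1 - ((p i : ℝ):ℂ)) *
              (if (∏ i : Fin k, if ε i then g i else 1) = x then 1 else 0)) * Ψ x :=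
          Finset.sum_comm
      _ = ∑ ε : Fin k → Bool, ∑ x : G,
            (if (∏ i : Fin k, if ε i then g i else 1) = x then
              (∏ i : Fin k, if ε i then ((p i : ℝ):ℂ) else 1 - ((p i : ℝ):ℂ)) * Ψ x else 0) := by
          refine Finset.sum_congr rfl fun ε _ => Finset.sum_congr rfl fun x _ => ?_
          rcases eq_or_ne (∏ i : Fin k, if ε i = true then g i else 1) x with hb | hb <;>
            simp [hb]
      _ = ∑ ε : Fin k → Bool,
            (∏ i : Fin k, if ε i then ((p i : ℝ):ℂ) else 1 - ((p i : ℝ):ℂ)) *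
              Ψ (∏ i : Fin k, if ε i then g i else 1) := by
          refine Finset.sum_congr rfl fun ε _ => ?_
          rw [Finset.sum_eq_single (∏ i : Fin k, if ε i = true then g i else 1)
            (fun x _ hx => if_neg fun hh => hx hh.symm)
            (fun hmem => absurd (Finset.mem_univ _) hmem), if_pos rfl]
      _ = ∑ ε : Fin k → Bool, ∏ i : Fin k,
            ((if ε i then ((p i : ℝ):ℂ) else 1 - ((p i : ℝ):ℂ)) * Ψ (if ε i then g i else 1)) := by
          refine Finset.sum_congr rfl fun ε _ => ?_
          rw [map_prod, Finset.prod_mul_distrib]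
      _ = ∏ i : Fin k, ∑ b : Bool,
            ((if b then ((p i : ℝ):ℂ) else 1 - ((p i : ℝ):ℂ)) * Ψ (if b then g i else 1)) :=
          aux_prod_sum (fun i b =>
            (if b then ((p i : ℝ):ℂ) else 1 - ((p i : ℝ):ℂ)) * Ψ (if b then g i else 1))
      _ = ∏ i : Fin k, (((1 - p i : ℝ) : ℂ) + ((p i : ℝ) : ℂ) * Ψ (g i)) := by
          refine Finset.prod_congr rfl fun i _ => ?_
          rw [Fintype.sum_bool]
          simp only [if_true, if_false, Bool.false_eq_true, map_one, mul_one]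
          push_cast
          ring
  have hzero : (0:ℂ) = ∏ i : Fin k, (((1 - p i : ℝ) : ℂ) + ((p i : ℝ) : ℂ) * Ψ (g i)) := by
    rw [← hkey]
    calc (0:ℂ) = ∑ x : G, ((1 / c : ℝ) : ℂ) * Ψ x := by
          rw [← Finset.mul_sum, hsum, mul_zero]
      _ = ∑ x : G, (subprodDist g p x : ℂ) * Ψ x := by
          refine Finset.sum_congr rfl fun x _ => ?_
          rw [hu x]
  obtain ⟨i, _, hfac⟩ := Finset.prod_eq_zero_iff.mp hzero.symm
  obtain ⟨hp0, hp1⟩ := hb i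
  have hpi0 : p i ≠ 0 := by
    intro h0
    rw [h0] at hfac
    norm_num at hfac
  have hval : Ψ (g i) = (((p i - 1) / p i : ℝ) : ℂ) := by
    have hpc : ((p i : ℝ) : ℂ) ≠ 0 := by exact_mod_cast hpi0
    push_cast at hfac
    rw [Complex.ofReal_div, Complex.ofReal_sub, Complex.ofReal_one, eq_div_iff hpc]
    linear_combination hfac
  have hreal : (((p i - 1) / p i : ℝ)) ^ m' = 1 := by
    have := hΨm (g i)
    rw [hval] at this
    exact_mod_cast this
  have hx0 : ((p i - 1) / p i : ℝ) ≤ 0 :=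
    div_nonpos_iff.mpr (Or.inr ⟨by linarith, hp0⟩)
  have := hodd.pow_nonpos hx0
  rw [hreal] at this
  linarith

/-- A finite abelian group is mixable iff it is a 2-group. -/
theorem mixable_abelian_iff (G : Type*) [CommGroup G] [Finite G] :
    Mixable G ↔ ∃ n : ℕ, Nat.card G = 2 ^ n := by
  constructor
  · exact two_pow_of_mixable
  · rintro ⟨n, h⟩
    exact mixable_of_two_pow h
end

section
/- A finite group G has no proper normal subgroup of odd index (i.e., G is 2'-simple) if and only if G has a subnormal series 1 = I₀ ⊴ I₁ ⊴ ⋯ ⊴ I_t = G in which every quotient I_{j+1}/I_j is generated by elements of order 2. -/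
/-- For subgroups `A ≤ B` with `A` normal in `B`, this says that the quotient
`B/A` is generated by its elements of order `2`: `B` is generated by `A`
together with the elements of `B` whose image in `B/A` has order exactly `2`. -/
def QuotTwoGen {G : Type*} [Group G] (A B : Subgroup G) : Prop :=
  B = Subgroup.closure ((A : Set G) ∪ {x : G | x ∈ B ∧ x ^ 2 ∈ A ∧ x ∉ A})

section Aux

variable {G : Type*} [Group G]

/-- One step up: adjoin to `N` all elements whose square lies in `N`. -/
private def stepUp (N : Subgroup G) : Subgroup G :=
  Subgroup.closure ((N : Set G) ∪ {x : G | x ^ 2 ∈ N ∧ x ∉ N})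

private lemma le_stepUp (N : Subgroup G) : N ≤ stepUp N :=
  fun _ hx => Subgroup.subset_closure (Or.inl hx)

private lemma quotTwoGen_stepUp (N : Subgroup G) : QuotTwoGen N (stepUp N) := by
  have hs : ((N : Set G) ∪ {x : G | x ^ 2 ∈ N ∧ x ∉ N}) =
      ((N : Set G) ∪ {x : G | x ∈ stepUp N ∧ x ^ 2 ∈ N ∧ x ∉ N}) := by
    ext x
    simp only [Set.mem_union, Set.mem_setOf_eq]
    constructor
    · rintro (h | ⟨h1, h2⟩)
      · exact Or.inl h
      · exact Or.inr ⟨Subgroup.subset_closure (Or.inr ⟨h1, h2⟩), h1, h2⟩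
    · rintro (h | ⟨_, h1, h2⟩)
      · exact Or.inl h
      · exact Or.inr ⟨h1, h2⟩
  unfold QuotTwoGen
  rw [← hs]
  rfl

private lemma stepUp_normal (N : Subgroup G) (hN : N.Normal) : (stepUp N).Normal := by
  constructor
  intro x hx g
  induction hx using Subgroup.closure_induction with
  | mem y hy =>
      apply Subgroup.subset_closure
      rcases hy with hy | ⟨h1, h2⟩
      · exact Or.inl (hN.conj_mem y hy g)
      · refine Or.inr ⟨?_, ?_⟩
        · have : (g * y * g⁻¹) ^ 2 = g * y ^ 2 * g⁻¹ := by
            simp [pow_two, mul_assoc]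
          rw [this]; exact hN.conj_mem _ h1 g
        · intro hcon
          apply h2
          have h3 := hN.conj_mem _ hcon g⁻¹
          rw [inv_inv] at h3
          simpa [mul_assoc] using h3
  | one => simpa using Subgroup.one_mem _
  | mul a b _ _ ha hb =>
      have : g * (a * b) * g⁻¹ = (g * a * g⁻¹) * (g * b * g⁻¹) := by group
      rw [this]; exact Subgroup.mul_mem _ ha hb
  | inv a _ ha =>
      have : g * a⁻¹ * g⁻¹ = (g * a * g⁻¹)⁻¹ := by group
      rw [this]; exact Subgroup.inv_mem _ ha

/-- If `x ^ 2 ∈ N` and `N` is normal of odd index, then `x ∈ N`. -/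
private lemma mem_of_sq_mem (N : Subgroup G) [Finite G] (hN : N.Normal)
    (hodd : Odd N.index) {x : G} (hx : x ^ 2 ∈ N) : x ∈ N := by
  haveI := hN
  set y : G ⧸ N := QuotientGroup.mk x with hy
  have hy2 : y ^ 2 = 1 := by
    rw [hy, ← QuotientGroup.mk_pow, QuotientGroup.eq_one_iff]
    exact hx
  have hdvd2 : orderOf y ∣ 2 := orderOf_dvd_of_pow_eq_one hy2
  have hdvdcard : orderOf y ∣ N.index := by
    rw [Subgroup.index_eq_card]
    exact orderOf_dvd_natCard y
  have h1 : orderOf y = 1 := by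
    rcases (Nat.prime_two).eq_one_or_self_of_dvd _ hdvd2 with h | h
    · exact h
    · exfalso
      rw [h] at hdvdcard
      rcases hodd with ⟨k, hk⟩
      omega
  have : y = 1 := orderOf_eq_one_iff.mp h1
  rwa [hy, QuotientGroup.eq_one_iff] at this

/-- If `stepUp N = N` and `N` is normal, then `N` has odd index. -/
private lemma odd_index_of_stepUp_eq (N : Subgroup G) [Finite G] (hN : N.Normal)
    (h : stepUp N = N) : Odd N.index := by
  haveI := hN
  by_contra hodd
  have heven : 2 ∣ Nat.card (G ⧸ N) := by
    rw [← Subgroup.index_eq_card]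
    exact (Nat.not_odd_iff_even.mp hodd).two_dvd
  haveI : Fact (Nat.Prime 2) := ⟨Nat.prime_two⟩
  obtain ⟨y, hy⟩ := exists_prime_orderOf_dvd_card' (G := G ⧸ N) 2 heven
  obtain ⟨x, rfl⟩ := QuotientGroup.mk_surjective y
  have hx2 : x ^ 2 ∈ N := by
    rw [← QuotientGroup.eq_one_iff, QuotientGroup.mk_pow, ← hy, pow_orderOf_eq_one]
  have hxn : x ∉ N := by
    intro hx
    have : (QuotientGroup.mk x : G ⧸ N) = 1 := (QuotientGroup.eq_one_iff x).mpr hx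
    rw [this] at hy
    simp at hy
  have : x ∈ stepUp N := Subgroup.subset_closure (Or.inr ⟨hx2, hxn⟩)
  rw [h] at this
  exact hxn this

end Aux

/-- A finite group `G` is `2'`-simple (has no proper normal subgroup of odd
index) iff it has a subnormal series `1 = I₀ ⊴ I₁ ⊴ ⋯ ⊴ I_t = G` in which each
quotient `I_{j+1}/I_j` is generated by elements of order `2`. -/
theorem two_prime_simple_iff_subnormal_series (G : Type*) [Group G] [Finite G] :
    (∀ N : Subgroup G, N.Normal → Odd N.index → N = ⊤) ↔
      ∃ (t : ℕ) (I : Fin (t + 1) → Subgroup G),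
        I 0 = ⊥ ∧ I (Fin.last t) = ⊤ ∧
        (∀ j : Fin t, I j.castSucc ≤ I j.succ) ∧
        (∀ j : Fin t, ∀ x ∈ I j.succ, ∀ n ∈ I j.castSucc, x * n * x⁻¹ ∈ I j.castSucc) ∧
        (∀ j : Fin t, QuotTwoGen (I j.castSucc) (I j.succ)) := by
  constructor
  · intro hsimple
    -- build the chain by iterating `stepUp` from `⊥`
    set N : ℕ → Subgroup G := fun k => stepUp^[k] ⊥ with hNdef
    have hNsucc : ∀ k, N (k + 1) = stepUp (N k) := fun k => by
      simp [hNdef, Function.iterate_succ_apply']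
    have hNnormal : ∀ k, (N k).Normal := by
      intro k
      induction k with
      | zero =>
          have h0 : N 0 = ⊥ := rfl
          rw [h0]
          exact ⟨fun n hn g => by
            simp only [Subgroup.mem_bot] at hn ⊢
            simp [hn]⟩
      | succ k ih => rw [hNsucc]; exact stepUp_normal _ ih
    have hNmono : ∀ k, N k ≤ N (k + 1) := fun k => by
      rw [hNsucc]; exact le_stepUp _
    -- the chain must stabilize
    have hstab : ∃ k, N (k + 1) = N k := by
      by_contra hcon
      push_neg at hcon
      have hsm : StrictMono N := strictMono_nat_of_lt_succ fun k =>
        lt_of_le_of_ne (hNmono k) (Ne.symm (hcon k))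
      obtain ⟨a, b, hab, heq⟩ := Finite.exists_ne_map_eq_of_infinite N
      exact hab (hsm.injective heq)
    obtain ⟨t, ht⟩ := hstab
    have htop : N t = ⊤ := by
      apply hsimple _ (hNnormal t)
      apply odd_index_of_stepUp_eq _ (hNnormal t)
      rw [← hNsucc]; exact ht
    refine ⟨t, fun j => N j.val, by simp [hNdef], by simpa using htop, ?_, ?_, ?_⟩
    · intro j
      simpa using hNmono j.val
    · intro j x _ n hn
      simpa using (hNnormal j.val).conj_mem n (by simpa using hn) x
    · intro j
      have : N (j.val + 1) = stepUp (N j.val) := hNsucc j.val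
      simpa [Fin.coe_castSucc, Fin.val_succ, this] using quotTwoGen_stepUp (N j.val)
  · rintro ⟨t, I, h0, htop, hmono, hconj, hgen⟩ N hN hodd
    haveI := hN
    have key : ∀ j : Fin (t + 1), I j ≤ N := by
      intro j
      induction j using Fin.induction with
      | zero => rw [h0]; exact bot_le
      | succ j ih =>
          rw [hgen j]
          rw [Subgroup.closure_le]
          rintro x (hx | ⟨_, hx2, _⟩)
          · exact ih hx
          · exact mem_of_sq_mem N hN hodd (ih hx2)
    have := key (Fin.last t)
    rw [htop] at this
    exact le_antisymm le_top this
end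

section
/- A finite group G is 2'-simple (has no nontrivial odd-order quotient) if and only if for every nontrivial complex representation ρ of G there exists g ∈ G such that −1 is an eigenvalue of ρ(g). -/
/-- A finite group `G` is `2'`-simple (no proper normal subgroup of odd index,
equivalently no nontrivial odd-order quotient) iff every nontrivial
finite-dimensional complex representation of `G` has an element whose image
has `-1` as an eigenvalue. -/
theorem two_prime_simple_iff_neg_one_eigenvalue (G : Type*) [Group G] [Finite G] :
    (∀ N : Subgroup G, N.Normal → Odd N.index → N = ⊤) ↔
      ∀ (V : Type) [AddCommGroup V] [Module ℂ V] [FiniteDimensional ℂ V]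
        (ρ : Representation ℂ G V), ρ ≠ 1 →
          ∃ g : G, Module.End.HasEigenvalue (ρ g) (-1) := by
  constructor
  · -- forward direction
    intro h V _ _ _ ρ hρ
    by_contra hc
    push_neg at hc
    -- key: if ρ g squares to 1 then ρ g = 1 (else -1 is an eigenvalue)
    have key : ∀ g : G, ρ g * ρ g = 1 → ρ g = 1 := by
      intro g hg2
      by_contra hg
      obtain ⟨v, hv⟩ : ∃ v, ρ g v ≠ v := by
        by_contra hv; push_neg at hv
        exact hg (LinearMap.ext fun v => hv v)
      have hvv : ρ g (ρ g v) = v := by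
        have := congrArg (fun f => f v) hg2
        simpa using this
      have hw0 : v - ρ g v ≠ 0 := sub_ne_zero.mpr (Ne.symm hv)
      have hww : ρ g (v - ρ g v) = (-1 : ℂ) • (v - ρ g v) := by
        rw [map_sub, hvv, neg_smul, one_smul]
        abel
      exact hc g (Module.End.hasEigenvalue_of_hasEigenvector
        ⟨Module.End.mem_eigenspace_iff.mpr hww, hw0⟩)
    have hker : ρ.ker.Normal := by
      constructor
      intro x hx g
      have hx1 : ρ x = 1 := hx
      have : ρ (g * x * g⁻¹) = 1 := by
        rw [map_mul, map_mul, hx1, mul_one, ← map_mul, mul_inv_cancel, map_one]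
      exact this
    haveI : Finite (G ⧸ ρ.ker) := Quotient.finite _
    haveI : Fintype (G ⧸ ρ.ker) := Fintype.ofFinite _
    have hodd : Odd ρ.ker.index := by
      rw [Nat.not_even_iff_odd.symm]
      intro heven
      have hdvd : 2 ∣ Fintype.card (G ⧸ ρ.ker) := by
        have h1 : ρ.ker.index = Nat.card (G ⧸ ρ.ker) := rfl
        have h2 : Nat.card (G ⧸ ρ.ker) = Fintype.card (G ⧸ ρ.ker) := Nat.card_eq_fintype_card
        rw [h1, h2] at heven
        exact heven.two_dvd
      haveI : Fact (Nat.Prime 2) := ⟨Nat.prime_two⟩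
      obtain ⟨q, hq⟩ := exists_prime_orderOf_dvd_card 2 hdvd
      obtain ⟨g, rfl⟩ := QuotientGroup.mk_surjective q
      have hq1 : (QuotientGroup.mk g : G ⧸ ρ.ker) ≠ 1 := by
        intro h1; rw [h1] at hq; simp [orderOf_one] at hq
      have hgk : g ∉ ρ.ker := fun hm => hq1 ((QuotientGroup.eq_one_iff g).mpr hm)
      have hsq : ((QuotientGroup.mk g : G ⧸ ρ.ker)) ^ 2 = 1 := by
        rw [← hq]; exact pow_orderOf_eq_one _
      have hg2 : g ^ 2 ∈ ρ.ker := by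
        rw [← QuotientGroup.eq_one_iff]
        simpa using hsq
      have : ρ g * ρ g = 1 := by
        have := MonoidHom.mem_ker.mp hg2
        rwa [pow_two, map_mul] at this
      exact hgk (MonoidHom.mem_ker.mpr (key g this))
    have htop := h ρ.ker hker hodd
    exact hρ (MonoidHom.ext fun g => by
      simpa using MonoidHom.mem_ker.mp (htop ▸ Subgroup.mem_top g))
  · -- converse direction
    intro h N hN hodd
    by_contra hne
    obtain ⟨g0, hg0⟩ : ∃ g, g ∉ N := by
      by_contra h'; push_neg at h'
      exact hne (Subgroup.eq_top_iff' N |>.mpr h')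
    haveI : Finite (G ⧸ N) := Quotient.finite _
    obtain ⟨n, ⟨e⟩⟩ := Finite.exists_equiv_fin (G ⧸ N)
    letI : MulAction G (Fin n) :=
      { smul := fun g x => e ((QuotientGroup.mk g : G ⧸ N) * e.symm x)
        one_smul := fun x => by
          show e ((QuotientGroup.mk 1 : G ⧸ N) * e.symm x) = x
          simp
        mul_smul := fun g g' x => by
          show e ((QuotientGroup.mk (g * g') : G ⧸ N) * e.symm x)
            = e ((QuotientGroup.mk g : G ⧸ N) * e.symm (e ((QuotientGroup.mk g' : G ⧸ N) * e.symm x)))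
          simp [QuotientGroup.mk_mul, mul_assoc] }
    have hsmul : ∀ (g : G) (x : Fin n), g • x = e ((QuotientGroup.mk g : G ⧸ N) * e.symm x) :=
      fun _ _ => rfl
    haveI : FiniteDimensional ℂ (MonoidAlgebra ℂ (Fin n)) :=
      Module.Finite.equiv ((MonoidAlgebra.coeffLinearEquiv ℂ).trans (Finsupp.linearEquivFunOnFinite ℂ ℂ (Fin n))).symm
    set ρ : Representation ℂ G (MonoidAlgebra ℂ (Fin n)) := Representation.ofMulAction ℂ G (Fin n) with hρdef
    have hρne : ρ ≠ 1 := by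
      intro h1
      have h2 : ρ g0 (MonoidAlgebra.single (e 1) 1) = MonoidAlgebra.single (e 1) 1 := by
        rw [h1]; simp
      rw [Representation.ofMulAction_single, hsmul] at h2
      simp only [Equiv.symm_apply_apply, mul_one] at h2
      have := MonoidAlgebra.single_inj.mp h2
      have hmk : (QuotientGroup.mk g0 : G ⧸ N) = 1 := by
        rcases this with ⟨he, _⟩ | ⟨h01, _⟩
        · exact e.injective he
        · exact absurd h01 one_ne_zero
      exact hg0 ((QuotientGroup.eq_one_iff g0).mp hmk)
    obtain ⟨g, hg⟩ := h (MonoidAlgebra ℂ (Fin n)) ρ hρne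
    -- (ρ g) ^ N.index = 1
    have hordq : ∀ q : G ⧸ N, q ^ N.index = 1 := by
      intro q
      have : N.index = Nat.card (G ⧸ N) := rfl
      rw [this]
      exact pow_card_eq_one'
    have hact : ∀ x : Fin n, (g ^ N.index) • x = x := by
      intro x
      rw [hsmul]
      have : (QuotientGroup.mk (g ^ N.index) : G ⧸ N) = 1 := by
        rw [QuotientGroup.mk_pow]; exact hordq _
      rw [this, one_mul, Equiv.apply_symm_apply]
    have hpow1 : (ρ g) ^ N.index = 1 := by
      rw [← map_pow]
      refine MonoidAlgebra.lhom_ext' fun a => LinearMap.ext fun b => ?_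
      simp only [LinearMap.comp_apply, MonoidAlgebra.lsingle_apply]
      rw [Representation.ofMulAction_single, hact]
      simp
    obtain ⟨v, hv⟩ := hg.exists_hasEigenvector
    have hv1 : ρ g v = (-1 : ℂ) • v := Module.End.mem_eigenspace_iff.mp hv.1
    have hvk : ∀ k : ℕ, ((ρ g) ^ k) v = ((-1 : ℂ) ^ k) • v := by
      intro k
      induction k with
      | zero => simp
      | succ k ih =>
        rw [pow_succ, Module.End.mul_apply, hv1, map_smul, ih, smul_smul, ← pow_succ']
    have hvm : v = -v := by
      have h1 : ((ρ g) ^ N.index) v = v := by rw [hpow1]; rfl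
      have h2 := hvk N.index
      rw [h1, Odd.neg_one_pow hodd, neg_smul, one_smul] at h2
      exact h2
    have : (2 : ℂ) • v = 0 := by
      rw [two_smul]
      nth_rewrite 1 [hvm]
      simp
    exact hv.2 (by simpa using (smul_eq_zero.mp this).resolve_left two_ne_zero)
end

section
/- Let ρ: G → GL_d(R) be a nontrivial irreducible real representation of a finite group G and let v ∈ R^d be a nonzero vector. Then there exist g ∈ G and p ∈ [0,1] such that the vector ((1−p)I + p·ρ(g))v lies in the orthogonal complement v^⊥. -/
/-- Let `ρ` be a nontrivial irreducible real representation of a finite group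
`G` on `ℝ^d` (with the standard inner product) and let `v ≠ 0`. Then there are
`g ∈ G` and `p ∈ [0,1]` such that `((1-p)·I + p·ρ(g)) v` is orthogonal to `v`. -/
theorem exists_send_to_orthogonal (G : Type*) [Group G] [Finite G] (d : ℕ)
    (ρ : Representation ℝ G (EuclideanSpace ℝ (Fin d)))
    (hirr : ∀ W : Submodule ℝ (EuclideanSpace ℝ (Fin d)),
      (∀ g : G, ∀ w ∈ W, ρ g w ∈ W) → W = ⊥ ∨ W = ⊤)
    (hnt : ρ ≠ 1) (v : EuclideanSpace ℝ (Fin d)) (hv : v ≠ 0) :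
    ∃ (g : G) (p : ℝ), 0 ≤ p ∧ p ≤ 1 ∧
      (inner ℝ (((1 - p) • (1 : Module.End ℝ (EuclideanSpace ℝ (Fin d))) + p • ρ g) v) v
        : ℝ) = 0 := by
  classical
  have : Fintype G := Fintype.ofFinite G
  -- the invariant subspace is trivial
  have hW : ρ.invariants = ⊥ := by
    rcases hirr ρ.invariants (fun g w hw => by
        intro h
        rw [hw g]
        exact hw h) with h | h
    · exact h
    · exfalso
      apply hnt
      refine MonoidHom.ext fun g => LinearMap.ext fun w => ?_
      have hw : w ∈ ρ.invariants := h ▸ Submodule.mem_top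
      simpa using hw g
  -- the averaging operator is zero
  have hsum : ∀ w, (∑ g : G, ρ g w) = 0 := by
    intro w
    have hmem : (∑ g : G, ρ g w) ∈ ρ.invariants := by
      intro h
      rw [map_sum]
      refine Fintype.sum_equiv (Equiv.mulLeft h) _ _ (fun g => ?_)
      rw [← Module.End.mul_apply, ← map_mul]
      rfl
    rw [hW] at hmem
    simpa using hmem
  -- hence the inner products sum to zero
  have hinner : (∑ g : G, (inner ℝ (ρ g v) v : ℝ)) = 0 := by
    rw [← sum_inner, hsum, inner_zero_left]
  have hvv : (0:ℝ) < inner ℝ v v :=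
    lt_of_le_of_ne real_inner_self_nonneg (Ne.symm (inner_self_ne_zero.mpr hv))
  -- find g with negative inner product
  have hex : ∃ g : G, (inner ℝ (ρ g v) v : ℝ) < 0 := by
    by_contra hcon
    push_neg at hcon
    have := (Finset.sum_eq_zero_iff_of_nonneg (fun g _ => hcon g)).mp hinner
    have h1 := this 1 (Finset.mem_univ 1)
    rw [map_one] at h1
    simp only [Module.End.one_apply] at h1
    exact absurd h1 (ne_of_gt hvv)
  obtain ⟨g, hg⟩ := hex
  set a : ℝ := inner ℝ v v with ha
  set c : ℝ := inner ℝ (ρ g v) v with hc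
  have hden : 0 < a - c := by linarith
  refine ⟨g, a / (a - c), by positivity, by
    rw [div_le_one hden]; linarith, ?_⟩
  have hexp : (inner ℝ (((1 - a / (a - c)) • (1 : Module.End ℝ (EuclideanSpace ℝ (Fin d)))
      + (a / (a - c)) • ρ g) v) v : ℝ) = (1 - a / (a - c)) * a + (a / (a - c)) * c := by
    simp [inner_add_left, inner_smul_left, ← ha, ← hc]
    left; rw [ha, real_inner_self_eq_norm_sq]
  rw [hexp]
  field_simp
  ring
end

section
/- Let G be a finite group acting 2-transitively on a finite set X, and let H = Stab_G(x) for some x ∈ X. If the action of H on X∖{x} is mixable, then the action of G on X is mixable, with mixlen(G, X) ≤ mixlen(H, X∖{x}) + 1. -/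
open scoped Classical

/-- The stabilizer of `x` acts on the complement `X ∖ {x}`. -/
instance stabilizerComplAction {G X : Type*} [Group G] [MulAction G X] (x : X) :
    MulAction (MulAction.stabilizer G x) {y : X // y ≠ x} where
  smul g y := ⟨(g : G) • (y : X), fun h => y.2 (MulAction.injective (g : G)
    (h.trans (g.2 : (g : G) • x = x).symm))⟩
  one_smul y := Subtype.ext (one_smul G (y : X))
  mul_smul g h y := Subtype.ext (mul_smul (g : G) (h : G) (y : X))

/-- Splitting a Bernoulli vector of length `k+1` into its first `k` entries and
its last entry. -/
def snocBoolEquiv (k : ℕ) : (Fin k → Bool) × Bool ≃ (Fin (k+1) → Bool) where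
  toFun q := Fin.snoc q.1 q.2
  invFun ε := (fun i => ε i.castSucc, ε (Fin.last k))
  left_inv q := by
    refine Prod.ext (funext fun i => ?_) ?_ <;> simp
  right_inv ε := by
    funext i
    induction i using Fin.lastCases <;> simp

lemma card_compl_add_one {X : Type*} [Finite X] (x : X) :
    Nat.card X = Nat.card {y : X // y ≠ x} + 1 := by
  have : Fintype X := Fintype.ofFinite X
  rw [Nat.card_eq_fintype_card, Nat.card_eq_fintype_card]
  have h1 : Fintype.card {y : X // y ≠ x} = Fintype.card X - Fintype.card {y : X // y = x} :=
    Fintype.card_subtype_compl _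
  have h2 : Fintype.card {y : X // y = x} = 1 := Fintype.card_subtype_eq x
  have h3 : 1 ≤ Fintype.card X := Fintype.card_pos_iff.mpr ⟨x⟩
  omega

/-- The key construction: extend a mixing sequence for the stabilizer action on
the complement by one element moving `x` to the base point. -/
lemma key_extend {G X : Type*} [Group G] [MulAction G X] [Finite X] (x : X) {k : ℕ}
    (g : Fin k → MulAction.stabilizer G x) (p : Fin k → ℝ)
    (y0 : {y : X // y ≠ x}) (hmix : IsActMixing g p y0)
    (s : G) (hs : s • x = (y0 : X)) :
    ∃ (h : Fin (k+1) → G) (p' : Fin (k+1) → ℝ), IsActMixing h p' x := by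
  classical
  have : Fintype X := Fintype.ofFinite X
  have : Fintype {y : X // y ≠ x} := Fintype.ofFinite _
  have hne : Nonempty {y : X // y ≠ x} := ⟨y0⟩
  set m : ℕ := Nat.card {y : X // y ≠ x} with hm
  have hcard : Nat.card X = m + 1 := card_compl_add_one x
  have hmpos : 0 < m := Nat.card_pos
  have hmR : (0 : ℝ) < (m : ℝ) := by exact_mod_cast hmpos
  have hm0 : (m : ℝ) ≠ 0 := ne_of_gt hmR
  have hnR : (0 : ℝ) < ((Nat.card X : ℕ) : ℝ) := by
    rw [hcard]; push_cast; linarith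
  have hinv1 : 1 / ((Nat.card X : ℕ) : ℝ) ≤ 1 := by
    rw [div_le_one hnR]
    exact_mod_cast Nat.one_le_iff_ne_zero.mpr (by omega)
  have hinv0 : (0 : ℝ) ≤ 1 / ((Nat.card X : ℕ) : ℝ) := by positivity
  obtain ⟨q, hq⟩ : ∃ q : ℝ, q = 1 - 1 / (Nat.card X : ℝ) := ⟨_, rfl⟩
  have hq0 : 0 ≤ q := by rw [hq]; linarith
  have hq1 : q ≤ 1 := by rw [hq]; linarith
  refine ⟨Fin.snoc (fun i => ((g i : G))) s, Fin.snoc p q, ?_, ?_⟩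
  · intro i
    induction i using Fin.lastCases with
    | last => simpa using ⟨hq0, hq1⟩
    | cast i => simpa using hmix.1 i
  · -- the distribution computation
    intro y
    -- abbreviations
    set w : (Fin k → Bool) → ℝ := fun ε => ∏ i : Fin k, if ε i then p i else 1 - p i with hw
    set Q : (Fin k → Bool) → {y : X // y ≠ x} :=
      fun ε => (List.ofFn fun i => if ε i then g i else 1).prod • y0 with hQ
    -- the total mass of w is 1
    have hsum1 : ∑ ε : Fin k → Bool, w ε = 1 := by
      have h1 : ∑ y' : {y : X // y ≠ x}, actDist g p y0 y' = 1 := by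
        rw [Finset.sum_congr rfl fun y' _ => hmix.2 y']
        simp only [Finset.sum_const, Finset.card_univ, nsmul_eq_mul,
          ← Nat.card_eq_fintype_card]
        rw [← hm]
        field_simp
      have h2 : ∑ y' : {y : X // y ≠ x}, actDist g p y0 y'
          = ∑ ε : Fin k → Bool, w ε := by
        unfold actDist
        rw [Finset.sum_comm]
        refine Finset.sum_congr rfl fun ε _ => ?_
        rw [← Finset.mul_sum]
        simp only [hw]
        conv_rhs => rw [← mul_one (∏ i : Fin k, if ε i then p i else 1 - p i)]
        congr 1
        exact (Finset.sum_eq_single_of_mem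
          ((List.ofFn fun i => if ε i then g i else 1).prod • y0)
          (Finset.mem_univ _) (fun b _ hb => if_neg fun h => hb h.symm)).trans (if_pos rfl)
      rw [← h2, h1]
    -- the coercion of the H-subproduct
    have hcoe : ∀ ε : Fin k → Bool,
        ((List.ofFn fun i => if ε i then g i else 1).prod : G)
          = (List.ofFn fun i => if ε i then ((g i : G)) else 1).prod := by
      intro ε
      calc ((List.ofFn fun i => if ε i then g i else 1).prod : G)
          = (MulAction.stabilizer G x).subtype (List.ofFn fun i => if ε i then g i else 1).prod :=
            rfl
        _ = ((List.ofFn fun i => if ε i then g i else 1).map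
              (MulAction.stabilizer G x).subtype).prod := (List.prod_hom _ _).symm
        _ = (List.ofFn fun i => if ε i then ((g i : G)) else 1).prod := by
            rw [List.map_ofFn]
            exact congrArg List.prod (congrArg List.ofFn (funext fun i => by
              by_cases hεi : ε i
              · simp [Function.comp_apply, hεi]
              · simp [Function.comp_apply, hεi]))
    -- rewrite the sum over Fin (k+1) → Bool
    unfold actDist
    rw [← Equiv.sum_comp (snocBoolEquiv k), Fintype.sum_prod_type]
    have hterm : ∀ (ε : Fin k → Bool) (b : Bool),
        (∏ i : Fin (k+1), if (snocBoolEquiv k (ε, b)) i then (Fin.snoc p q : Fin (k+1) → ℝ) i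
            else 1 - (Fin.snoc p q : Fin (k+1) → ℝ) i) *
          (if (List.ofFn fun i => if (snocBoolEquiv k (ε, b)) i then
              (Fin.snoc (fun j => ((g j : G))) s : Fin (k+1) → G) i else 1).prod • x = y then (1:ℝ) else 0)
        = w ε * ((if b then q else 1 - q) *
            (if b then (if ((Q ε : X)) = y then (1:ℝ) else 0) else (if x = y then (1:ℝ) else 0))) := by
      intro ε b
      have hprodp : (∏ i : Fin (k+1), if (snocBoolEquiv k (ε, b)) i then (Fin.snoc p q : Fin (k+1) → ℝ) i
          else 1 - (Fin.snoc p q : Fin (k+1) → ℝ) i) = w ε * (if b then q else 1 - q) := by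
        rw [Fin.prod_univ_castSucc]
        simp only [snocBoolEquiv, Equiv.coe_fn_mk, Fin.snoc_castSucc, Fin.snoc_last]
        rfl
      have hlist : (List.ofFn fun i => if (snocBoolEquiv k (ε, b)) i then
            (Fin.snoc (fun j => ((g j : G))) s : Fin (k+1) → G) i else 1).prod
          = (List.ofFn fun i => if ε i then ((g i : G)) else 1).prod * (if b then s else 1) := by
        rw [List.ofFn_succ']
        rw [List.prod_concat]
        simp only [snocBoolEquiv, Equiv.coe_fn_mk, Fin.snoc_castSucc, Fin.snoc_last]
      rw [hprodp, hlist, ← hcoe ε]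
      have hPstab : ((List.ofFn fun i => if ε i then g i else 1).prod : G) • x = x :=
        ((List.ofFn fun i => if ε i then g i else 1).prod).2
      cases b with
      | false =>
        simp only [Bool.false_eq_true, if_false, mul_one, mul_smul, one_smul]
        rw [hPstab]
        ring
      | true =>
        simp only [eq_self_iff_true, if_true, mul_smul]
        rw [hs]
        have hQv : ((List.ofFn fun i => if ε i then g i else 1).prod : G) • (y0 : X) = ((Q ε : X)) :=
          rfl
        rw [hQv]
        ring
    rw [Finset.sum_congr rfl fun ε _ => Finset.sum_congr rfl fun b _ => hterm ε b]
    -- evaluate the Bool sum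
    have hBool : ∀ ε : Fin k → Bool,
        ∑ b : Bool, w ε * ((if b then q else 1 - q) *
            (if b then (if ((Q ε : X)) = y then (1:ℝ) else 0) else (if x = y then (1:ℝ) else 0)))
        = w ε * ((1 - q) * (if x = y then (1:ℝ) else 0))
          + w ε * (q * (if ((Q ε : X)) = y then (1:ℝ) else 0)) := by
      intro ε
      rw [Fintype.sum_bool]
      simp only [eq_self_iff_true, if_true, Bool.false_eq_true, if_false]
      ring
    rw [Finset.sum_congr rfl fun ε _ => hBool ε, Finset.sum_add_distrib]
    by_cases hy : y = x
    · have e1 : ∀ ε ∈ (Finset.univ : Finset (Fin k → Bool)),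
          w ε * ((1 - q) * (if x = y then (1:ℝ) else 0)) = w ε * (1 - q) := fun ε _ => by
        rw [if_pos hy.symm, mul_one]
      have e2 : ∀ ε ∈ (Finset.univ : Finset (Fin k → Bool)),
          w ε * (q * (if ((Q ε : X)) = y then (1:ℝ) else 0)) = 0 := fun ε _ => by
        rw [if_neg fun h => (Q ε).2 (h.trans hy), mul_zero, mul_zero]
      rw [Finset.sum_congr rfl e1, Finset.sum_congr rfl e2, Finset.sum_const_zero, add_zero,
        ← Finset.sum_mul, hsum1, one_mul, hq]
      ring
    · have e1 : ∀ ε ∈ (Finset.univ : Finset (Fin k → Bool)),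
          w ε * ((1 - q) * (if x = y then (1:ℝ) else 0)) = 0 := fun ε _ => by
        rw [if_neg fun h => hy h.symm, mul_zero, mul_zero]
      have e2 : ∀ ε ∈ (Finset.univ : Finset (Fin k → Bool)),
          w ε * (q * (if ((Q ε : X)) = y then (1:ℝ) else 0))
            = q * (w ε * (if ((Q ε : X)) = y then (1:ℝ) else 0)) := fun ε _ => by ring
      rw [Finset.sum_congr rfl e1, Finset.sum_const_zero, zero_add,
        Finset.sum_congr rfl e2, ← Finset.mul_sum]
      have hact : ∑ ε : Fin k → Bool, w ε * (if ((Q ε : X)) = y then (1:ℝ) else 0)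
          = actDist g p y0 ⟨y, hy⟩ := by
        unfold actDist
        refine Finset.sum_congr rfl fun ε _ => ?_
        congr 1
        exact @if_congr ℝ _ _ (Classical.propDecidable _) (Classical.propDecidable _) _ _ _ _
          (Iff.symm Subtype.ext_iff) rfl rfl
      rw [hact, hmix.2 ⟨y, hy⟩, ← hm, hq]
      have hXm : ((Nat.card X : ℕ) : ℝ) = (m : ℝ) + 1 := by rw [hcard]; push_cast; ring
      have hm1 : (m : ℝ) + 1 ≠ 0 := by positivity
      rw [hXm]
      field_simp
      ring

/-- If `G` acts 2-transitively on a finite set `X` and the action of the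
stabilizer `H = Stab_G(x)` on `X ∖ {x}` is mixable, then the action of `G` on
`X` is mixable, with `mixlen (G, X) ≤ mixlen (H, X ∖ {x}) + 1`. -/
theorem mixable_of_two_transitive (G X : Type*) [Group G] [MulAction G X]
    [Finite G] [Finite X]
    (h2t : ∀ x₁ x₂ y₁ y₂ : X, x₁ ≠ x₂ → y₁ ≠ y₂ →
      ∃ g : G, g • x₁ = y₁ ∧ g • x₂ = y₂)
    (x : X)
    (hH : MixableAction (MulAction.stabilizer G x) {y : X // y ≠ x}) :
    MixableAction G X ∧
      actMixlen G X ≤ actMixlen (MulAction.stabilizer G x) {y : X // y ≠ x} + 1 := by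
  classical
  obtain ⟨k0, g0, p0, y00, hmix0⟩ := hH
  have hne : {k | ∃ (g : Fin k → MulAction.stabilizer G x) (p : Fin k → ℝ)
      (x0 : {y : X // y ≠ x}), IsActMixing g p x0}.Nonempty := ⟨k0, g0, p0, y00, hmix0⟩
  have hmem := Nat.sInf_mem hne
  obtain ⟨g, p, y0, hmix⟩ := hmem
  obtain ⟨s, hs, -⟩ := h2t x (y0 : X) (y0 : X) x (Ne.symm y0.2) y0.2
  obtain ⟨h, p', hmixG⟩ := key_extend x g p y0 hmix s hs
  have hGmem : (sInf {k | ∃ (g : Fin k → MulAction.stabilizer G x) (p : Fin k → ℝ)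
      (x0 : {y : X // y ≠ x}), IsActMixing g p x0} + 1) ∈
      {k | ∃ (g : Fin k → G) (p : Fin k → ℝ) (x0 : X), IsActMixing g p x0} :=
    ⟨h, p', x, hmixG⟩
  constructor
  · exact ⟨_, h, p', x, hmixG⟩
  · exact Nat.sInf_le hGmem
end
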